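/- arXiv:2001.05584 — 2 statements merged into one kernel-verified Lean document; each statement's English description precedes it below -/
import Mathlib

section
/- Let Ω ⊂ P(ℝ^d) be a properly convex domain, p₀ ∈ Ω, x ∈ ∂Ω, p_n ∈ [p₀, x) a sequence converging to x, and g_n ∈ Aut(Ω) a sequence with sup_n H_Ω(g_n p₀, p_n) < ∞. If g_n converges in P(End(ℝ^d)) to T, then T(Ω) = F_Ω(x), the open face of x; in particular image(T) = span(F_Ω(x)). -/
open Matrix Topology Filter
open scoped MatrixGroups

noncomputable section

abbrev Vd (d : ℕ) := Fin d → ℝ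
abbrev Md (d : ℕ) := Matrix (Fin d) (Fin d) ℝ

open scoped Classical in
/-- The multiset of absolute values of the complex eigenvalues (roots of the
characteristic polynomial over `ℂ`, with multiplicity) of a real `d × d` matrix. -/
def eigMods {d : ℕ} (g : Md d) : Multiset ℝ :=
  ((g.charpoly.map (algebraMap ℝ ℂ)).roots).map (fun z => ‖z‖)

open scoped Classical in
/-- `g` is proximal: the largest modulus of an eigenvalue is attained exactly once. -/
def IsProximal {d : ℕ} (g : Md d) : Prop :=
  ∃ r ∈ eigMods g, (eigMods g).count r = 1 ∧ ∀ s ∈ eigMods g, s ≤ r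

/-- `ℓ` is the attracting eigenline of `g`: the eigenspace of a real eigenvalue of
maximal modulus, of dimension one. -/
def IsTopEigenline {d : ℕ} (g : Md d) (ℓ : Submodule ℝ (Vd d)) : Prop :=
  ∃ μ : ℝ, (∀ s ∈ eigMods g, s ≤ |μ|) ∧
    ℓ = Module.End.eigenspace (Matrix.toLin' g) μ ∧ Module.finrank ℝ ℓ = 1

/-- `C` is the cone over a properly convex domain `Ω ⊂ P(ℝ^d)`: an open convex
cone, nonempty, whose closure contains no line (salient). -/
def IsProperCone {d : ℕ} (C : Set (Vd d)) : Prop :=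
  IsOpen C ∧ Convex ℝ C ∧ C.Nonempty ∧
    (∀ v ∈ C, ∀ t : ℝ, 0 < t → t • v ∈ C) ∧
    (∀ v ∈ closure C, -v ∈ closure C → v = 0)

/-- `g` induces an automorphism of the properly convex domain with cone `C`. -/
def ConeAut {d : ℕ} (C : Set (Vd d)) (g : Md d) : Prop :=
  IsUnit g ∧ (fun v => g.mulVec v) '' C = C

/-- Gauge `M(u/v) = inf{t > 0 : t v - u ∈ closure C}`. -/
def gaugeM {d : ℕ} (C : Set (Vd d)) (u v : Vd d) : ℝ :=
  sInf {t : ℝ | 0 < t ∧ t • v - u ∈ closure C}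

/-- The Hilbert distance between the projective points `[u]`, `[v]` of the properly
convex domain with cone `C` : `H([u],[v]) = (1/2) log (M(u/v) M(v/u))`. -/
def hilbertDist {d : ℕ} (C : Set (Vd d)) (u v : Vd d) : ℝ :=
  (1/2) * Real.log (gaugeM C u v * gaugeM C v u)

/-- The closed projective segment `[[u],[v]]` is contained in `∂Ω`. -/
def BSeg {d : ℕ} (C : Set (Vd d)) (u v : Vd d) : Prop :=
  ∀ s t : ℝ, 0 ≤ s → 0 ≤ t → s • u + t • v ∉ C

/-- `[v]` belongs to the open face `F_Ω([u])`: either `[v] = [u]`, or some open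
projective segment contained in `closure Ω` contains both `[u]` and `[v]`. -/
def InFace {d : ℕ} (C : Set (Vd d)) (u v : Vd d) : Prop :=
  v ∈ closure C ∧ ((∃ t : ℝ, 0 < t ∧ v = t • u) ∨
    ∃ ε : ℝ, 0 < ε ∧ u - ε • v ∈ closure C ∧ v - ε • u ∈ closure C)

/-- `[v]` is an extreme point of `closure Ω`: it is not in the interior of any
nondegenerate projective segment contained in `closure Ω`. -/
def IsExtremePt {d : ℕ} (C : Set (Vd d)) (v : Vd d) : Prop :=
  v ∈ closure C ∧ v ≠ 0 ∧ ∀ a ∈ closure C, ∀ b ∈ closure C,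
    ∀ s t : ℝ, 0 < s → 0 < t → v = s • a + t • b → ∃ c : ℝ, a = c • b


/-- The quotient topology on the projective space `P(V)`. -/
instance projTopology {K V : Type*} [DivisionRing K] [AddCommGroup V] [Module K V]
    [TopologicalSpace V] : TopologicalSpace (Projectivization K V) :=
  inferInstanceAs (TopologicalSpace (Quotient (projectivizationSetoid K V)))

/-- The set of projective points with a representative in `A`. -/
def projSet {d : ℕ} (A : Set (Vd d)) : Set (Projectivization ℝ (Vd d)) :=
  {x | ∃ (v : Vd d) (hv : v ≠ 0), v ∈ A ∧ x = Projectivization.mk ℝ v hv}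

/-- The action of `γ ∈ GL(d,ℝ)` on the projective space `P(ℝ^d)`. -/
def pAct {d : ℕ} (γ : GL (Fin d) ℝ) : Projectivization ℝ (Vd d) → Projectivization ℝ (Vd d) :=
  Projectivization.map (Matrix.toLin' (↑γ : Md d)) (by
    have : Function.LeftInverse (Matrix.toLin' (↑γ⁻¹ : Md d)) (Matrix.toLin' (↑γ : Md d)) := by
      intro v
      simp only [Matrix.toLin'_apply, Matrix.mulVec_mulVec]
      rw [Matrix.coe_units_inv, Matrix.nonsing_inv_mul _ ((Matrix.isUnit_iff_isUnit_det _).mp γ.isUnit), Matrix.one_mulVec]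
    exact this.injective)

/-- `T` lies in the closure of `Λ` in `P(End(ℝ^d))`. -/
def InEndClosure {d : ℕ} (Λ : Set (Md d)) (T : Md d) : Prop :=
  T ≠ 0 ∧ ∃ (g : ℕ → Md d) (c : ℕ → ℝ), (∀ n, g n ∈ Λ) ∧
    Tendsto (fun n => c n • g n) atTop (nhds T)


section helpers
variable {d : ℕ} {C : Set (Vd d)}

lemma zero_mem_D (hC : IsProperCone C) : (0 : Vd d) ∈ closure C := by
  obtain ⟨v, hv⟩ := hC.2.2.1
  have ht : Tendsto (fun n : ℕ => (1 / (n + 1) : ℝ) • v) atTop (nhds ((0:ℝ) • v)) :=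
    tendsto_one_div_add_atTop_nhds_zero_nat.smul_const v
  rw [zero_smul] at ht
  exact mem_closure_of_tendsto ht (Filter.Eventually.of_forall fun n =>
    hC.2.2.2.1 v hv _ (by positivity))

lemma C_smul (hC : IsProperCone C) {x : Vd d} (hx : x ∈ C) {t : ℝ} (ht : 0 < t) :
    t • x ∈ C := hC.2.2.2.1 x hx t ht

lemma D_smul (hC : IsProperCone C) {x : Vd d} (hx : x ∈ closure C) {t : ℝ} (ht : 0 ≤ t) :
    t • x ∈ closure C := by
  rcases eq_or_lt_of_le ht with h | h
  · rw [← h, zero_smul]; exact zero_mem_D hC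
  · have h1 : (t • ·) '' C ⊆ C := by
      rintro y ⟨z, hz, rfl⟩; exact C_smul hC hz h
    have h2 : (t • ·) '' closure C ⊆ closure ((t • ·) '' C) :=
      image_closure_subset_closure_image (continuous_const_smul t)
    exact closure_mono h1 (h2 ⟨x, hx, rfl⟩)

lemma C_add (hC : IsProperCone C) {x y : Vd d} (hx : x ∈ C) (hy : y ∈ C) : x + y ∈ C := by
  have hm : (1/2 : ℝ) • x + (1/2 : ℝ) • y ∈ C :=
    hC.2.1 hx hy (by norm_num) (by norm_num) (by norm_num)
  have := C_smul hC hm (t := 2) (by norm_num)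
  rwa [smul_add, smul_smul, smul_smul, show (2:ℝ) * (1/2) = 1 by norm_num, one_smul, one_smul] at this

lemma D_add (hC : IsProperCone C) {x y : Vd d} (hx : x ∈ closure C) (hy : y ∈ closure C) :
    x + y ∈ closure C := by
  have hm : (1/2 : ℝ) • x + (1/2 : ℝ) • y ∈ closure C :=
    (hC.2.1.closure) hx hy (by norm_num) (by norm_num) (by norm_num)
  have := D_smul hC hm (t := 2) (by norm_num)
  rwa [smul_add, smul_smul, smul_smul, show (2:ℝ) * (1/2) = 1 by norm_num, one_smul, one_smul] at this

lemma C_add_D (hC : IsProperCone C) {x y : Vd d} (hx : x ∈ C) (hy : y ∈ closure C) :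
    x + y ∈ C := by
  obtain ⟨ε, hε, hball⟩ := Metric.isOpen_iff.mp hC.1 x hx
  obtain ⟨z, hz, hdz⟩ := Metric.mem_closure_iff.mp hy ε hε
  have h1 : x + (y - z) ∈ C := by
    apply hball
    simp only [Metric.mem_ball]
    have : dist (x + (y - z)) x = dist y z := by
      rw [dist_eq_norm, dist_eq_norm]
      congr 1
      abel
    rw [this]; exact hdz
  have := C_add hC h1 hz
  rwa [add_assoc, sub_add_cancel] at this

lemma salient (hC : IsProperCone C) {x : Vd d} (hx : x ∈ closure C) (hx' : -x ∈ closure C) :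
    x = 0 := hC.2.2.2.2 x hx hx'

lemma normality (hC : IsProperCone C) :
    ∃ Λ : ℝ, 0 < Λ ∧ ∀ x y : Vd d, x ∈ closure C → y - x ∈ closure C → ‖x‖ ≤ Λ * ‖y‖ := by
  by_contra hcon
  have h' : ∀ k : ℕ, ∃ x y : Vd d, x ∈ closure C ∧ y - x ∈ closure C ∧ ((k:ℝ)+1) * ‖y‖ < ‖x‖ := by
    intro k
    by_contra hk
    push_neg at hk
    exact hcon ⟨(k:ℝ)+1, by positivity, fun x y hx hy => hk x y hx hy⟩
  choose x y hx hyx hn using h'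
  have hxpos : ∀ k, 0 < ‖x k‖ := by
    intro k
    rcases (norm_nonneg (x k)).lt_or_eq with h1 | h1
    · exact h1
    · exfalso
      have := hn k
      rw [← h1] at this
      exact absurd this (not_lt.mpr (by positivity))
  set u : ℕ → Vd d := fun k => ‖x k‖⁻¹ • x k with hu
  have husph : ∀ k, u k ∈ Metric.sphere (0 : Vd d) 1 := by
    intro k
    simp only [hu, mem_sphere_iff_norm, sub_zero, norm_smul, norm_inv, norm_norm]
    rw [inv_mul_cancel₀ (ne_of_gt (hxpos k))]
  obtain ⟨a, hasph, φ, hφ, hlim⟩ := (isCompact_sphere (0 : Vd d) 1).tendsto_subseq husph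
  have haD : a ∈ closure C :=
    isClosed_closure.mem_of_tendsto hlim
      (.of_forall fun k => D_smul hC (hx (φ k)) (by positivity))
  have hzlim : Tendsto (fun k => ‖x (φ k)‖⁻¹ • y (φ k)) atTop (nhds (0 : Vd d)) := by
    apply squeeze_zero_norm (a := fun k : ℕ => 1/((k:ℝ)+1))
    · intro k
      have h1 : ((φ k : ℝ)+1) * ‖y (φ k)‖ < ‖x (φ k)‖ := hn (φ k)
      have h2 : ((k:ℝ)+1) ≤ ((φ k : ℝ)+1) := by
        have h2' : (k:ℝ) ≤ (φ k : ℝ) := Nat.cast_le.mpr hφ.le_apply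
        linarith
      rw [norm_smul, norm_inv, norm_norm, inv_mul_eq_div,
        div_le_div_iff₀ (hxpos (φ k)) (by positivity : (0:ℝ) < (k:ℝ)+1)]
      nlinarith [norm_nonneg (y (φ k)), norm_nonneg (x (φ k))]
    · exact tendsto_one_div_add_atTop_nhds_zero_nat
  have hna : Tendsto (fun k => ‖x (φ k)‖⁻¹ • y (φ k) - u (φ k)) atTop (nhds (0 - a)) :=
    hzlim.sub hlim
  rw [zero_sub] at hna
  have hnaD : -a ∈ closure C := by
    apply isClosed_closure.mem_of_tendsto hna
    apply Filter.Eventually.of_forall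
    intro k
    have : ‖x (φ k)‖⁻¹ • (y (φ k) - x (φ k)) ∈ closure C :=
      D_smul hC (hyx (φ k)) (by positivity)
    rwa [smul_sub] at this
  have := salient hC haD hnaD
  rw [mem_sphere_iff_norm, sub_zero, this, norm_zero] at hasph
  norm_num at hasph

lemma exN (hC : IsProperCone C) {u v : Vd d} (hu : u ∈ C) (hv : v ∈ C) :
    ∃ t : ℝ, 0 < t ∧ t • v - u ∈ C := by
  have hcont : Tendsto (fun s : ℝ => v - s • u) (nhds 0) (nhds v) := by
    have h1 : Tendsto (fun s : ℝ => s • u) (nhds (0:ℝ)) (nhds ((0:ℝ) • u)) :=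
      ((continuous_id.smul continuous_const).tendsto (0:ℝ))
    rw [zero_smul] at h1
    simpa using tendsto_const_nhds.sub h1
  have hev := hcont.eventually (hC.1.mem_nhds hv)
  obtain ⟨δ, hδ, hball⟩ := Metric.eventually_nhds_iff_ball.mp hev
  have hs : v - (δ/2) • u ∈ C := by
    apply hball
    rw [Metric.mem_ball, Real.dist_eq, sub_zero, abs_of_pos (by positivity)]
    linarith
  refine ⟨2/δ, by positivity, ?_⟩
  have := C_smul hC hs (t := 2/δ) (by positivity)
  rwa [smul_sub, smul_smul, div_mul_div_comm, mul_comm δ 2, div_self (by positivity), one_smul] at this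

lemma gauge_spec (hC : IsProperCone C) (h0 : (0:Vd d) ∉ C) {u v : Vd d} (hu : u ∈ C) (hv : v ∈ C) :
    0 < gaugeM C u v ∧ gaugeM C u v • v - u ∈ closure C := by
  set S := {t : ℝ | 0 < t ∧ t • v - u ∈ closure C} with hSdef
  obtain ⟨t0, ht0, ht0'⟩ := exN hC hu hv
  have hne : S.Nonempty := ⟨t0, ht0, subset_closure ht0'⟩
  have hbdd : BddBelow S := ⟨0, fun t ht => ht.1.le⟩
  have hmem : gaugeM C u v ∈ closure S := csInf_mem_closure hne hbdd
  have hcl : gaugeM C u v • v - u ∈ closure C := by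
    have hfc : Continuous (fun t : ℝ => t • v - u) :=
      (continuous_id.smul continuous_const).sub continuous_const
    have h1 : (fun t : ℝ => t • v - u) '' S ⊆ closure C := by
      rintro _ ⟨t, ht, rfl⟩; exact ht.2
    have h2 : (fun t : ℝ => t • v - u) '' closure S ⊆
        closure ((fun t : ℝ => t • v - u) '' S) :=
      image_closure_subset_closure_image hfc
    have h3 := h2 ⟨_, hmem, rfl⟩
    have h4 := closure_mono h1 h3
    rwa [closure_closure] at h4
  have hnonneg : 0 ≤ gaugeM C u v := le_csInf hne fun t ht => ht.1.le
  rcases hnonneg.lt_or_eq with hpos | heq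
  · exact ⟨hpos, hcl⟩
  · exfalso
    rw [← heq, zero_smul, zero_sub] at hcl
    have h5 : u = 0 := salient hC (subset_closure hu) hcl
    exact h0 (h5 ▸ hu)

lemma gauge_prod_ge_one (hC : IsProperCone C) (h0 : (0:Vd d) ∉ C) {u v : Vd d}
    (hu : u ∈ C) (hv : v ∈ C) : 1 ≤ gaugeM C u v * gaugeM C v u := by
  obtain ⟨h1p, h1⟩ := gauge_spec hC h0 hu hv
  obtain ⟨h2p, h2⟩ := gauge_spec hC h0 hv hu
  set m1 := gaugeM C u v
  set m2 := gaugeM C v u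
  by_contra hlt
  push_neg at hlt
  have key : (m1 * m2) • u - u ∈ closure C := by
    have := D_add hC (D_smul hC h2 h1p.le) h1
    rwa [smul_sub, smul_smul, sub_add_sub_cancel] at this
  have key2 : -((1 - m1*m2) • u) ∈ closure C := by
    rw [sub_smul, one_smul, neg_sub]
    exact key
  have key3 : (1 - m1*m2) • u ∈ closure C :=
    D_smul hC (subset_closure hu) (by linarith)
  have := salient hC key3 key2
  rcases smul_eq_zero.mp this with h | h
  · linarith [h]
  · exact h0 (h ▸ hu)

lemma aut_mem_C (hg : ConeAut C g) {v : Vd d} (hv : v ∈ C) : g.mulVec v ∈ C := by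
  rw [← hg.2]; exact ⟨v, hv, rfl⟩

lemma mulVec_continuous {d : ℕ} (g : Md d) : Continuous (fun v : Vd d => g.mulVec v) := by
  have : IsLinearMap ℝ (fun v : Vd d => g.mulVec v) :=
    ⟨fun x y => Matrix.mulVec_add g x y, fun c x => Matrix.mulVec_smul g c x⟩
  exact (this.mk' _).continuous_of_finiteDimensional

lemma aut_mem_D (hg : ConeAut C g) {x : Vd d} (hx : x ∈ closure C) :
    g.mulVec x ∈ closure C := by
  have h2 : (fun v : Vd d => g.mulVec v) '' closure C ⊆
      closure ((fun v : Vd d => g.mulVec v) '' C) :=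
    image_closure_subset_closure_image (mulVec_continuous g)
  have := h2 ⟨x, hx, rfl⟩
  rwa [hg.2] at this

lemma aut_inv_cancel (hg : ConeAut C g) (x : Vd d) : g⁻¹.mulVec (g.mulVec x) = x := by
  rw [Matrix.mulVec_mulVec, Matrix.nonsing_inv_mul g
    ((Matrix.isUnit_iff_isUnit_det g).mp hg.1), Matrix.one_mulVec]

lemma aut_cancel_inv (hg : ConeAut C g) (x : Vd d) : g.mulVec (g⁻¹.mulVec x) = x := by
  rw [Matrix.mulVec_mulVec, Matrix.mul_nonsing_inv g
    ((Matrix.isUnit_iff_isUnit_det g).mp hg.1), Matrix.one_mulVec]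

lemma aut_inv_mem_C (hg : ConeAut C g) {v : Vd d} (hv : v ∈ C) : g⁻¹.mulVec v ∈ C := by
  rw [← hg.2] at hv
  obtain ⟨x, hx, rfl⟩ := hv
  rwa [aut_inv_cancel hg]

lemma aut_inv_mem_D (hg : ConeAut C g) {x : Vd d} (hx : x ∈ closure C) :
    g⁻¹.mulVec x ∈ closure C := by
  have h1 : (fun v : Vd d => g⁻¹.mulVec v) '' C ⊆ C := by
    rintro _ ⟨y, hy, rfl⟩; exact aut_inv_mem_C hg hy
  have h2 : (fun v : Vd d => g⁻¹.mulVec v) '' closure C ⊆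
      closure ((fun v : Vd d => g⁻¹.mulVec v) '' C) :=
    image_closure_subset_closure_image (mulVec_continuous g⁻¹)
  exact closure_mono h1 (h2 ⟨x, hx, rfl⟩)

end helpers

section mainhelpers
variable {d : ℕ}

lemma matApply_continuous (x : Vd d) : Continuous (fun A : Md d => A.mulVec x) := by
  have h : IsLinearMap ℝ (fun A : Md d => A.mulVec x) :=
    ⟨fun A B => Matrix.add_mulVec A B x, fun c A => Matrix.smul_mulVec c A x⟩
  exact (h.mk' _).continuous_of_finiteDimensional

lemma pair_mulVec_continuous : Continuous (fun q : Md d × Vd d => q.1.mulVec q.2) := by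
  apply continuous_pi
  intro i
  simp only [Matrix.mulVec, dotProduct]
  apply continuous_finset_sum
  intro j _
  exact ((continuous_apply j).comp ((continuous_apply i).comp continuous_fst)).mul
    ((continuous_apply j).comp continuous_snd)

end mainhelpers

set_option maxHeartbeats 4000000 in
/-- if `g_n ∈ Aut(Ω)` tracks a sequence `p_n ∈ [p₀, x)` converging to
the boundary point `x = [ux]` within bounded Hilbert distance, and `g_n → T` in
`P(End(ℝ^d))`, then `T(Ω) = F_Ω(x)`; in particular `image T = span F_Ω(x)`. -/
theorem stmt15 {d : ℕ} (C : Set (Vd d)) (hC : IsProperCone C)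
    (u₀ : Vd d) (hu₀ : u₀ ∈ C) (ux : Vd d) (hux : ux ∈ closure C) (hux0 : ux ≠ 0)
    (huxb : ux ∉ C) (p : ℕ → Vd d)
    (hp : ∀ n, ∃ a b : ℝ, 0 < a ∧ 0 ≤ b ∧ p n = a • u₀ + b • ux)
    (hpx : ∃ c : ℕ → ℝ, Tendsto (fun n => c n • p n) atTop (nhds ux))
    (G : ℕ → Md d) (hG : ∀ n, ConeAut C (G n))
    (M : ℝ) (hbdd : ∀ n, hilbertDist C ((G n).mulVec u₀) (p n) ≤ M)
    (T : Md d) (hT0 : T ≠ 0) (c' : ℕ → ℝ)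
    (hconv : Tendsto (fun n => c' n • G n) atTop (nhds T)) :
    (∀ v ∈ C, ∃ w : Vd d, (w = T.mulVec v ∨ w = -(T.mulVec v)) ∧ InFace C ux w) ∧
      (∀ w : Vd d, InFace C ux w → w ≠ 0 → ∃ v ∈ C, ∃ e : ℝ, e ≠ 0 ∧ T.mulVec v = e • w) ∧
      LinearMap.range (Matrix.toLin' T) = Submodule.span ℝ {w : Vd d | InFace C ux w} := by
  obtain ⟨c, hc⟩ := hpx
  have huxn : 0 < ‖ux‖ := norm_pos_iff.mpr hux0
  -- 0 ∉ C
  have h0C : (0 : Vd d) ∉ C := by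
    intro h0
    obtain ⟨r, hr, hball⟩ := Metric.isOpen_iff.mp hC.1 0 h0
    have hspos : 0 < r / (2 * ‖ux‖) := by positivity
    have hkey : (r / (2 * ‖ux‖)) * ‖ux‖ = r / 2 := by field_simp
    have h1 : (r / (2 * ‖ux‖)) • ux ∈ C := by
      apply hball
      rw [Metric.mem_ball, dist_zero_right, norm_smul, Real.norm_eq_abs, abs_of_pos hspos, hkey]
      linarith
    have h2 : -((r / (2 * ‖ux‖)) • ux) ∈ C := by
      apply hball
      rw [Metric.mem_ball, dist_zero_right, norm_neg, norm_smul, Real.norm_eq_abs,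
        abs_of_pos hspos, hkey]
      linarith
    have h3 := salient hC (subset_closure h1) (subset_closure h2)
    rcases smul_eq_zero.mp h3 with h | h
    · exact absurd h (ne_of_gt hspos)
    · exact hux0 h
  have hu0ne : u₀ ≠ 0 := fun h => h0C (h ▸ hu₀)
  have hu0n : 0 < ‖u₀‖ := norm_pos_iff.mpr hu0ne
  have hpC : ∀ n, p n ∈ C := by
    intro n
    obtain ⟨a, b, ha, hb, hpe⟩ := hp n
    rw [hpe]
    exact C_add_D hC (C_smul hC hu₀ ha) (D_smul hC hux hb)
  have hnotprop : ∀ r : ℝ, ux ≠ r • u₀ := by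
    intro r hr
    rcases lt_trichotomy r 0 with h | h | h
    · have h1 : -ux ∈ C := by
        rw [hr, ← neg_smul]
        exact C_smul hC hu₀ (by linarith)
      exact hux0 (salient hC hux (subset_closure h1))
    · rw [h, zero_smul] at hr; exact hux0 hr
    · exact huxb (hr ▸ C_smul hC hu₀ h)
  obtain ⟨Λ, hΛ, hN⟩ := normality hC
  set K := Real.exp (2 * M) with hK
  have hKpos : 0 < K := Real.exp_pos _
  have hGU : ∀ n, (G n).mulVec u₀ ∈ C := fun n => aut_mem_C (hG n) hu₀
  set A : ℕ → ℝ := fun n => gaugeM C ((G n).mulVec u₀) (p n) with hA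
  set B : ℕ → ℝ := fun n => gaugeM C (p n) ((G n).mulVec u₀) with hB
  have hAspec : ∀ n, 0 < A n ∧ A n • p n - (G n).mulVec u₀ ∈ closure C := fun n =>
    gauge_spec hC h0C (hGU n) (hpC n)
  have hBspec : ∀ n, 0 < B n ∧ B n • (G n).mulVec u₀ - p n ∈ closure C := fun n =>
    gauge_spec hC h0C (hpC n) (hGU n)
  have hAB1 : ∀ n, 1 ≤ A n * B n := fun n => gauge_prod_ge_one hC h0C (hGU n) (hpC n)
  have hABK : ∀ n, A n * B n ≤ K := by
    intro n
    have h1 := hbdd n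
    rw [hilbertDist] at h1
    have hABpos : 0 < A n * B n := mul_pos (hAspec n).1 (hBspec n).1
    have h2 : Real.log (A n * B n) ≤ 2 * M := by
      simp only [hA, hB] at *
      linarith
    calc A n * B n = Real.exp (Real.log (A n * B n)) := (Real.exp_log hABpos).symm
      _ ≤ K := by rw [hK]; exact Real.exp_le_exp.mpr h2
  -- eventually c' n ≠ 0
  have hc'ne : ∀ᶠ n in atTop, c' n ≠ 0 := by
    by_contra h
    rw [Filter.not_eventually] at h
    obtain ⟨φ, hφ, hφ0⟩ := Filter.extraction_of_frequently_atTop h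
    have h1 : Tendsto (fun k => c' (φ k) • G (φ k)) atTop (nhds T) :=
      hconv.comp hφ.tendsto_atTop
    have h2 : (fun k => c' (φ k) • G (φ k)) = fun _ => (0 : Md d) :=
      funext fun k => by rw [not_not.mp (hφ0 k), zero_smul]
    rw [h2] at h1
    exact hT0 (tendsto_nhds_unique h1 tendsto_const_nhds)
  -- eventually c n > 0
  have hcpos : ∀ᶠ n in atTop, 0 < c n := by
    by_contra h
    rw [Filter.not_eventually] at h
    obtain ⟨φ, hφ, hφ0⟩ := Filter.extraction_of_frequently_atTop h
    have h1 : Tendsto (fun k => -(c (φ k) • p (φ k))) atTop (nhds (-ux)) :=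
      (hc.comp hφ.tendsto_atTop).neg
    have hmem : ∀ k, -(c (φ k) • p (φ k)) ∈ closure C := by
      intro k
      have hle : (0:ℝ) ≤ -(c (φ k)) := by
        have := not_lt.mp (hφ0 k); linarith
      have := D_smul hC (subset_closure (hpC (φ k))) hle
      rwa [neg_smul] at this
    have h2 : -ux ∈ closure C :=
      isClosed_closure.mem_of_tendsto h1 (.of_forall hmem)
    exact hux0 (salient hC hux h2)
  -- sign
  have hsign : ∃ σ : ℝ, (σ = 1 ∨ σ = -1) ∧ ∃ᶠ n in atTop, 0 < σ * c' n := by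
    by_cases h : ∃ᶠ n in atTop, 0 < c' n
    · exact ⟨1, Or.inl rfl, by simpa using h⟩
    · refine ⟨-1, Or.inr rfl, ?_⟩
      rw [Filter.not_frequently] at h
      apply Filter.Eventually.frequently
      filter_upwards [h.and hc'ne] with n hn
      have h1 := not_lt.mp hn.1
      have h2 : c' n < 0 := lt_of_le_of_ne h1 hn.2
      nlinarith
  obtain ⟨σ, hσpm, hσfreq⟩ := hsign
  have hσsq : σ * σ = 1 := by rcases hσpm with h | h <;> rw [h] <;> norm_num
  have hσne : σ ≠ 0 := by rcases hσpm with h | h <;> rw [h] <;> norm_num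
  -- master subsequence
  obtain ⟨φ, hφm, hφp⟩ := Filter.extraction_of_frequently_atTop (hσfreq.and_eventually hcpos)
  set dd : ℕ → ℝ := fun k => σ * c' (φ k) with hdd
  have hddpos : ∀ k, 0 < dd k := fun k => (hφp k).1
  have hcφpos : ∀ k, 0 < c (φ k) := fun k => (hφp k).2
  have hconvφ : Tendsto (fun k => c' (φ k) • G (φ k)) atTop (nhds T) :=
    hconv.comp hφm.tendsto_atTop
  have hcφ : Tendsto (fun k => c (φ k) • p (φ k)) atTop (nhds ux) :=
    hc.comp hφm.tendsto_atTop
  -- limits of dd • G v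
  have keyMV : ∀ x : Vd d,
      Tendsto (fun k => c' (φ k) • ((G (φ k)).mulVec x)) atTop (nhds (T.mulVec x)) := by
    intro x
    have h1 := ((matApply_continuous x).tendsto T).comp hconvφ
    have h2 : ((fun A : Md d => A.mulVec x) ∘ fun k => c' (φ k) • G (φ k)) =
        fun k => c' (φ k) • ((G (φ k)).mulVec x) := by
      funext k
      simp [Function.comp, Matrix.smul_mulVec]
    rwa [h2] at h1
  have hTu : ∀ x : Vd d,
      Tendsto (fun k => dd k • ((G (φ k)).mulVec x)) atTop (nhds (σ • T.mulVec x)) := by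
    intro x
    have h1 := (keyMV x).const_smul σ
    have h2 : (fun k => σ • (c' (φ k) • ((G (φ k)).mulVec x))) =
        fun k => dd k • ((G (φ k)).mulVec x) := by
      funext k
      rw [smul_smul, hdd]
    rwa [h2] at h1
  have hTvD : ∀ v ∈ C, σ • T.mulVec v ∈ closure C := by
    intro v hv
    apply isClosed_closure.mem_of_tendsto (hTu v)
    apply Filter.Eventually.of_forall
    intro k
    exact D_smul hC (subset_closure (aut_mem_C (hG (φ k)) hv)) (hddpos k).le
  -- kernel avoids C
  have hTnz : ∃ v'' ∈ C, T.mulVec v'' ≠ 0 := by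
    have hy : ∃ y : Vd d, T.mulVec y ≠ 0 := by
      by_contra h
      push_neg at h
      apply hT0
      have h2 : Matrix.toLin' T = 0 := by
        apply LinearMap.ext
        intro y
        rw [Matrix.toLin'_apply, h]
        rfl
      exact Matrix.toLin'.map_eq_zero_iff.mp h2
    obtain ⟨y, hy⟩ := hy
    by_cases h : T.mulVec u₀ = 0
    · obtain ⟨r, hr, hball⟩ := Metric.isOpen_iff.mp hC.1 u₀ hu₀
      have hyn : 0 < ‖y‖ := norm_pos_iff.mpr (fun h' => hy (by rw [h', Matrix.mulVec_zero]))
      have hδ : 0 < r / (2 * ‖y‖) := by positivity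
      have hmem : u₀ + (r / (2 * ‖y‖)) • y ∈ C := by
        apply hball
        rw [Metric.mem_ball, dist_eq_norm, add_sub_cancel_left, norm_smul, Real.norm_eq_abs,
          abs_of_pos hδ]
        have e : r / (2 * ‖y‖) * ‖y‖ = r / 2 := by field_simp
        rw [e]
        linarith
      refine ⟨_, hmem, ?_⟩
      rw [Matrix.mulVec_add, h, zero_add, Matrix.mulVec_smul]
      exact smul_ne_zero (ne_of_gt hδ) hy
    · exact ⟨u₀, hu₀, h⟩
  have hkerC : ∀ v ∈ C, T.mulVec v ≠ 0 := by
    obtain ⟨v'', hv''C, hv''⟩ := hTnz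
    intro v hv hTv
    obtain ⟨t, ht, htm⟩ := exN hC hv''C hv
    have h1 := hTvD _ htm
    have e1 : σ • T.mulVec (t • v - v'') = -(σ • T.mulVec v'') := by
      rw [Matrix.mulVec_sub, Matrix.mulVec_smul, hTv, smul_zero, zero_sub, smul_neg]
    rw [e1] at h1
    have h2 := hTvD v'' hv''C
    have h3 := salient hC h2 h1
    rcases smul_eq_zero.mp h3 with h | h
    · exact hσne h
    · exact hv'' h
  set w₀ : Vd d := σ • T.mulVec u₀ with hw₀def
  have hw₀D : w₀ ∈ closure C := hTvD u₀ hu₀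
  have hw₀ne : w₀ ≠ 0 := smul_ne_zero hσne (hkerC u₀ hu₀)
  have hw₀n : 0 < ‖w₀‖ := norm_pos_iff.mpr hw₀ne
  set W : ℕ → Vd d := fun k => dd k • ((G (φ k)).mulVec u₀) with hW
  have hWlim : Tendsto W atTop (nhds w₀) := hTu u₀
  have hWD : ∀ k, W k ∈ closure C := fun k =>
    D_smul hC (subset_closure (hGU (φ k))) (hddpos k).le
  set θ : ℕ → ℝ := fun k => c (φ k) / (A (φ k) * dd k) with hθ
  have hθpos : ∀ k, 0 < θ k := fun k =>
    div_pos (hcφpos k) (mul_pos (hAspec (φ k)).1 (hddpos k))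
  have hR1 : ∀ k, c (φ k) • p (φ k) - θ k • W k ∈ closure C := by
    intro k
    have hA1 := (hAspec (φ k)).1
    have h2 := D_smul hC (hAspec (φ k)).2 (le_of_lt (div_pos (hcφpos k) hA1))
    have hAne : A (φ k) ≠ 0 := ne_of_gt hA1
    have hddne : dd k ≠ 0 := ne_of_gt (hddpos k)
    have e1 : (c (φ k) / A (φ k)) • (A (φ k) • p (φ k) - (G (φ k)).mulVec u₀)
        = c (φ k) • p (φ k) - θ k • W k := by
      simp only [hθ, hW]
      match_scalars
      · field_simp
      · field_simp
    rwa [e1] at h2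
  have hR2 : ∀ k, W k - (1 / (A (φ k) * B (φ k) * θ k)) • (c (φ k) • p (φ k)) ∈ closure C := by
    intro k
    have hB1 := (hBspec (φ k)).1
    have h2 := D_smul hC (hBspec (φ k)).2 (le_of_lt (div_pos (hddpos k) hB1))
    have hAne : A (φ k) ≠ 0 := ne_of_gt (hAspec (φ k)).1
    have hBne : B (φ k) ≠ 0 := ne_of_gt hB1
    have hddne : dd k ≠ 0 := ne_of_gt (hddpos k)
    have hcne : c (φ k) ≠ 0 := ne_of_gt (hcφpos k)
    have e1 : (dd k / B (φ k)) • (B (φ k) • (G (φ k)).mulVec u₀ - p (φ k))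
        = W k - (1 / (A (φ k) * B (φ k) * θ k)) • (c (φ k) • p (φ k)) := by
      simp only [hθ, hW]
      match_scalars
      · field_simp
      · field_simp
    rwa [e1] at h2
  -- bounds on θ
  have hWnlim : Tendsto (fun k => ‖W k‖) atTop (nhds ‖w₀‖) := hWlim.norm
  have hcplim : Tendsto (fun k => ‖c (φ k) • p (φ k)‖) atTop (nhds ‖ux‖) := hcφ.norm
  set Bup : ℝ := 2 * Λ * (‖ux‖ + 1) / ‖w₀‖ with hBup
  have hBuppos : 0 < Bup := by positivity
  set Q : ℝ := 2 * Λ * (‖w₀‖ + 1) / ‖ux‖ with hQ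
  have hQpos : 0 < Q := by positivity
  have hθup : ∀ᶠ k in atTop, θ k ≤ Bup := by
    filter_upwards [hWnlim.eventually (eventually_gt_nhds (by linarith : ‖w₀‖/2 < ‖w₀‖)),
      hcplim.eventually (eventually_lt_nhds (by linarith : ‖ux‖ < ‖ux‖ + 1))] with k h1 h2
    have h3 := hN (θ k • W k) (c (φ k) • p (φ k)) (D_smul hC (hWD k) (hθpos k).le) (hR1 k)
    rw [norm_smul, Real.norm_eq_abs, abs_of_pos (hθpos k)] at h3
    have h4 : θ k * (‖w₀‖/2) ≤ Λ * (‖ux‖ + 1) := by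
      nlinarith [norm_nonneg (c (φ k) • p (φ k)), (hθpos k).le]
    rw [hBup]
    rw [le_div_iff₀ hw₀n]
    nlinarith
  have hθlo : ∀ᶠ k in atTop, 1 / (K * Q) ≤ θ k := by
    filter_upwards [hWnlim.eventually (eventually_lt_nhds (by linarith : ‖w₀‖ < ‖w₀‖ + 1)),
      hcplim.eventually (eventually_gt_nhds (by linarith : ‖ux‖/2 < ‖ux‖))] with k h1 h2
    have hApos := (hAspec (φ k)).1
    have hBpos := (hBspec (φ k)).1
    have hθk := hθpos k
    have hABθpos : 0 < A (φ k) * B (φ k) * θ k := mul_pos (mul_pos hApos hBpos) hθk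
    have hcoef : 0 < 1 / (A (φ k) * B (φ k) * θ k) := by
      exact div_pos one_pos hABθpos
    have hxD : (1 / (A (φ k) * B (φ k) * θ k)) • (c (φ k) • p (φ k)) ∈ closure C :=
      D_smul hC (D_smul hC (subset_closure (hpC (φ k))) (hcφpos k).le) hcoef.le
    have h3 := hN _ (W k) hxD (hR2 k)
    rw [norm_smul, Real.norm_eq_abs, abs_of_pos hcoef] at h3
    have u1 := mul_lt_mul_of_pos_left h2 hcoef
    have u2 := mul_lt_mul_of_pos_left h1 hΛ
    have h5 : (1 / (A (φ k) * B (φ k) * θ k)) * (‖ux‖/2) ≤ Λ * (‖w₀‖+1) := by linarith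
    have h6 : 1 / (A (φ k) * B (φ k) * θ k) ≤ Q := by
      rw [hQ, le_div_iff₀ huxn]; linarith
    have h7 : 1/Q ≤ A (φ k) * B (φ k) * θ k := (one_div_le hABθpos hQpos).mp h6
    have h9 : θ k * (A (φ k) * B (φ k)) ≤ θ k * K :=
      mul_le_mul_of_nonneg_left (hABK (φ k)) (hθpos k).le
    have h10 : 1/Q ≤ θ k * K := by nlinarith [h7, h9]
    rw [div_le_iff₀ (mul_pos hKpos hQpos)]
    have h11 : (1/Q) * Q = 1 := one_div_mul_cancel (ne_of_gt hQpos)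
    nlinarith [mul_le_mul_of_nonneg_right h10 hQpos.le, h11]
  -- padding
  have pad : ∀ (x y : Vd d) (α β : ℝ), y ∈ closure C → x - α • y ∈ closure C → 0 ≤ β →
      β ≤ α → x - β • y ∈ closure C := by
    intro x y α β hy hx hβ hle
    have h1 := D_add hC hx (D_smul hC hy (sub_nonneg.mpr hle))
    have e : (x - α • y) + (α - β) • y = x - β • y := by module
    rwa [e] at h1
  -- face relations for w₀
  have hface1 : ux - (1/(K*Q)) • w₀ ∈ closure C := by
    apply isClosed_closure.mem_of_tendsto (hcφ.sub (hWlim.const_smul (1/(K*Q))))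
    filter_upwards [hθlo] with k hk
    have h1 := D_add hC (hR1 k) (D_smul hC (hWD k) (sub_nonneg.mpr hk))
    have e : (c (φ k) • p (φ k) - θ k • W k) + (θ k - 1/(K*Q)) • W k
        = c (φ k) • p (φ k) - (1/(K*Q)) • W k := by module
    rwa [e] at h1
  have hface2 : w₀ - (1/(K*Bup)) • ux ∈ closure C := by
    apply isClosed_closure.mem_of_tendsto (hWlim.sub (hcφ.const_smul (1/(K*Bup))))
    filter_upwards [hθup] with k hk
    have hABθpos : 0 < A (φ k) * B (φ k) * θ k :=
      mul_pos (mul_pos (hAspec (φ k)).1 (hBspec (φ k)).1) (hθpos k)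
    have u1 : A (φ k) * B (φ k) * θ k ≤ K * θ k :=
      mul_le_mul_of_nonneg_right (hABK (φ k)) (hθpos k).le
    have u2 : K * θ k ≤ K * Bup := mul_le_mul_of_nonneg_left hk hKpos.le
    have h6 : 1/(K*Bup) ≤ 1/(A (φ k) * B (φ k) * θ k) :=
      one_div_le_one_div_of_le hABθpos (by linarith)
    have h1 := D_add hC (hR2 k)
      (D_smul hC (D_smul hC (subset_closure (hpC (φ k))) (hcφpos k).le) (sub_nonneg.mpr h6))
    have e : (W k - (1 / (A (φ k) * B (φ k) * θ k)) • (c (φ k) • p (φ k)))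
        + (1 / (A (φ k) * B (φ k) * θ k) - 1/(K*Bup)) • (c (φ k) • p (φ k))
        = W k - (1/(K*Bup)) • (c (φ k) • p (φ k)) := by module
    rwa [e] at h1
  set ε : ℝ := min (1/(K*Q)) (1/(K*Bup)) with hεdef
  have hεpos : 0 < ε := lt_min (by positivity) (by positivity)
  have hfA : ux - ε • w₀ ∈ closure C :=
    pad ux w₀ (1/(K*Q)) ε hw₀D hface1 hεpos.le (min_le_left _ _)
  have hfB : w₀ - ε • ux ∈ closure C :=
    pad w₀ ux (1/(K*Bup)) ε hux hface2 hεpos.le (min_le_right _ _)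
  -- GOAL A
  have goalA : ∀ v ∈ C, InFace C ux (σ • T.mulVec v) := by
    intro v hv
    obtain ⟨t₁, ht₁, hm₁⟩ := exN hC hv hu₀
    obtain ⟨t₂, ht₂, hm₂⟩ := exN hC hu₀ hv
    have hwD : σ • T.mulVec v ∈ closure C := hTvD v hv
    have h1 : t₁ • w₀ - σ • T.mulVec v ∈ closure C := by
      have h1'' := hTvD _ hm₁
      have e : σ • T.mulVec (t₁ • u₀ - v) = t₁ • w₀ - σ • T.mulVec v := by
        rw [Matrix.mulVec_sub, Matrix.mulVec_smul, hw₀def]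
        module
      rwa [e] at h1''
    have h2 : t₂ • (σ • T.mulVec v) - w₀ ∈ closure C := by
      have h2'' := hTvD _ hm₂
      have e : σ • T.mulVec (t₂ • v - u₀) = t₂ • (σ • T.mulVec v) - w₀ := by
        rw [Matrix.mulVec_sub, Matrix.mulVec_smul, hw₀def]
        module
      rwa [e] at h2''
    have hminpos : 0 < min (ε/t₁) (ε/t₂) := lt_min (div_pos hεpos ht₁) (div_pos hεpos ht₂)
    refine ⟨hwD, Or.inr ⟨min (ε/t₁) (ε/t₂), hminpos, ?_, ?_⟩⟩
    · refine pad ux (σ • T.mulVec v) (ε/t₁) _ hwD ?_ hminpos.le (min_le_left _ _)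
      have h3 := D_add hC hfA (D_smul hC h1 (le_of_lt (div_pos hεpos ht₁)))
      have e : (ux - ε • w₀) + (ε/t₁) • (t₁ • w₀ - σ • T.mulVec v)
          = ux - (ε/t₁) • (σ • T.mulVec v) := by
        match_scalars <;> (field_simp; try ring)
      rwa [e] at h3
    · refine pad (σ • T.mulVec v) ux (ε/t₂) _ hux ?_ hminpos.le (min_le_right _ _)
      have h3 := D_smul hC (D_add hC h2 hfB) (le_of_lt (by positivity : (0:ℝ) < 1/t₂))
      have e : (1/t₂) • ((t₂ • (σ • T.mulVec v) - w₀) + (w₀ - ε • ux))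
          = σ • T.mulVec v - (ε/t₂) • ux := by
        match_scalars <;> (field_simp; try ring)
      rwa [e] at h3
  -- coefficients of p
  choose pa pb hpa hpb hpe using hp
  have hBchalf : ∀ᶠ k in atTop, 1/2 ≤ c (φ k) * pb (φ k) := by
    by_contra hcon
    rw [Filter.not_eventually] at hcon
    have hBcbd : ∀ᶠ k in atTop, c (φ k) * pb (φ k) ≤ Λ * (‖ux‖ + 1) / ‖ux‖ := by
      filter_upwards [hcplim.eventually (eventually_lt_nhds (lt_add_one ‖ux‖))] with k h2
      have hnn : 0 ≤ c (φ k) * pb (φ k) := mul_nonneg (hcφpos k).le (hpb (φ k))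
      have hxk : (c (φ k) * pb (φ k)) • ux ∈ closure C := D_smul hC hux hnn
      have hyx : c (φ k) • p (φ k) - (c (φ k) * pb (φ k)) • ux ∈ closure C := by
        have e : c (φ k) • p (φ k) - (c (φ k) * pb (φ k)) • ux
            = (c (φ k) * pa (φ k)) • u₀ := by
          rw [hpe (φ k)]; module
        rw [e]
        exact subset_closure (C_smul hC hu₀ (mul_pos (hcφpos k) (hpa (φ k))))
      have h3 := hN _ _ hxk hyx
      rw [norm_smul, Real.norm_eq_abs, abs_of_nonneg hnn] at h3
      rw [le_div_iff₀ huxn]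
      nlinarith
    obtain ⟨ψ, hψm, hψp⟩ := Filter.extraction_of_frequently_atTop (hcon.and_eventually hBcbd)
    have hmemI : ∀ j, c (φ (ψ j)) * pb (φ (ψ j)) ∈ Set.Icc (0:ℝ) (Λ * (‖ux‖ + 1) / ‖ux‖) :=
      fun j => ⟨mul_nonneg (hcφpos (ψ j)).le (hpb (φ (ψ j))), (hψp j).2⟩
    obtain ⟨β, hβI, ψ', hψ'm, hβlim⟩ := isCompact_Icc.tendsto_subseq hmemI
    have hβhalf : β ≤ 1/2 := by
      apply le_of_tendsto hβlim
      apply Filter.Eventually.of_forall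
      intro j
      exact le_of_not_ge (hψp (ψ' j)).1
    have hβlim' : Tendsto (fun j => c (φ (ψ (ψ' j))) * pb (φ (ψ (ψ' j)))) atTop (nhds β) := hβlim
    have hcp2 : Tendsto (fun j => c (φ (ψ (ψ' j))) • p (φ (ψ (ψ' j)))) atTop (nhds ux) :=
      (hcφ.comp hψm.tendsto_atTop).comp hψ'm.tendsto_atTop
    have hAu : Tendsto (fun j => (c (φ (ψ (ψ' j))) * pa (φ (ψ (ψ' j)))) • u₀) atTop
        (nhds ((1 - β) • ux)) := by
      have h1 := hcp2.sub (hβlim'.smul_const ux)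
      have e : (fun j => c (φ (ψ (ψ' j))) • p (φ (ψ (ψ' j)))
          - (c (φ (ψ (ψ' j))) * pb (φ (ψ (ψ' j)))) • ux)
          = fun j => (c (φ (ψ (ψ' j))) * pa (φ (ψ (ψ' j)))) • u₀ := by
        funext j
        rw [hpe (φ (ψ (ψ' j)))]
        module
      rw [e] at h1
      have e2 : ux - β • ux = (1-β) • ux := by module
      rwa [e2] at h1
    have hAkpos : ∀ j, 0 < c (φ (ψ (ψ' j))) * pa (φ (ψ (ψ' j))) :=
      fun j => mul_pos (hcφpos (ψ (ψ' j))) (hpa (φ (ψ (ψ' j))))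
    have hAklim : Tendsto (fun j => c (φ (ψ (ψ' j))) * pa (φ (ψ (ψ' j)))) atTop
        (nhds (‖(1-β) • ux‖ / ‖u₀‖)) := by
      have h1 := hAu.norm.div_const ‖u₀‖
      have e : (fun j => ‖(c (φ (ψ (ψ' j))) * pa (φ (ψ (ψ' j)))) • u₀‖ / ‖u₀‖)
          = fun j => c (φ (ψ (ψ' j))) * pa (φ (ψ (ψ' j))) := by
        funext j
        rw [norm_smul, Real.norm_eq_abs, abs_of_pos (hAkpos j), mul_div_assoc,
          div_self (ne_of_gt hu0n), mul_one]
      rwa [e] at h1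
    have huniq : (‖(1-β) • ux‖ / ‖u₀‖) • u₀ = (1-β) • ux :=
      tendsto_nhds_unique (hAklim.smul_const u₀) hAu
    have hβ1 : (0:ℝ) < 1 - β := by linarith
    apply hnotprop ((1-β)⁻¹ * (‖(1-β) • ux‖ / ‖u₀‖))
    rw [mul_smul, huniq, smul_smul, inv_mul_cancel₀ (ne_of_gt hβ1), one_smul]
  have hBc : ∀ᶠ k in atTop, (2:ℝ) • (c (φ k) • p (φ k)) - ux ∈ closure C := by
    filter_upwards [hBchalf] with k hk
    have e : (2:ℝ) • (c (φ k) • p (φ k)) - ux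
        = (2 * (c (φ k) * pa (φ k))) • u₀ + (2 * (c (φ k) * pb (φ k)) - 1) • ux := by
      rw [hpe (φ k)]; module
    rw [e]
    exact D_add hC
      (D_smul hC (subset_closure hu₀) (mul_nonneg (by norm_num) (mul_nonneg (hcφpos k).le (hpa (φ k)).le)))
      (D_smul hC hux (by linarith))
  -- GOAL B
  have goalB : ∀ w : Vd d, InFace C ux w → w ≠ 0 →
      ∃ v ∈ C, ∃ e : ℝ, e ≠ 0 ∧ T.mulVec v = e • w := by
    intro w hwF hwne
    obtain ⟨hwD, hcase⟩ := hwF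
    have hrel : ∃ εw : ℝ, 0 < εw ∧ ux - εw • w ∈ closure C ∧ w - εw • ux ∈ closure C := by
      rcases hcase with ⟨t, ht, rfl⟩ | h
      · refine ⟨min (1/(2*t)) (t/2), lt_min (by positivity) (by positivity), ?_, ?_⟩
        · have e : ux - (min (1/(2*t)) (t/2)) • t • ux
              = (1 - (min (1/(2*t)) (t/2)) * t) • ux := by module
          rw [e]
          apply D_smul hC hux
          have h1 : min (1/(2*t)) (t/2) ≤ 1/(2*t) := min_le_left _ _
          have h2 : min (1/(2*t)) (t/2) * t ≤ (1/(2*t)) * t :=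
            mul_le_mul_of_nonneg_right h1 ht.le
          have h3 : (1/(2*t)) * t = 1/2 := by field_simp
          linarith
        · have e : t • ux - (min (1/(2*t)) (t/2)) • ux
              = (t - min (1/(2*t)) (t/2)) • ux := by module
          rw [e]
          apply D_smul hC hux
          have h1 : min (1/(2*t)) (t/2) ≤ t/2 := min_le_right _ _
          linarith
      · exact h
    obtain ⟨εw, hεw, hrw1, hrw2⟩ := hrel
    set δ₁ : ℝ := εw * ε with hδ₁
    have hδ₁pos : 0 < δ₁ := mul_pos hεw hεpos
    set z : Vd d := w - δ₁ • w₀ with hzdef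
    have hzD : z ∈ closure C := by
      have h1 := D_add hC hrw2 (D_smul hC hfA hεw.le)
      have e : (w - εw • ux) + εw • (ux - ε • w₀) = z := by
        rw [hzdef, hδ₁]; module
      rwa [e] at h1
    have hzux : (1/εw) • ux - z ∈ closure C := by
      have h1 := D_add hC (D_smul hC hrw1 (by positivity : (0:ℝ) ≤ 1/εw))
        (D_smul hC hw₀D hδ₁pos.le)
      have e : (1/εw) • (ux - εw • w) + δ₁ • w₀ = (1/εw) • ux - z := by
        rw [hzdef]
        match_scalars <;> (field_simp; try ring)
      rwa [e] at h1
    by_cases hz0 : z = 0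
    · refine ⟨u₀, hu₀, σ / δ₁, div_ne_zero hσne (ne_of_gt hδ₁pos), ?_⟩
      have hwd : w = δ₁ • w₀ := by
        have h1 := hz0
        rw [hzdef, sub_eq_zero] at h1
        exact h1
      rw [hwd, smul_smul, div_mul_cancel₀ _ (ne_of_gt hδ₁pos), hw₀def, smul_smul, hσsq, one_smul]
    · set vk : ℕ → Vd d := fun k => (G (φ k))⁻¹.mulVec z with hvk
      have hvkD : ∀ k, vk k ∈ closure C := fun k => aut_inv_mem_D (hG (φ k)) hzD
      have hvkne : ∀ k, vk k ≠ 0 := by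
        intro k hzero
        apply hz0
        have h1 := congrArg (fun y => (G (φ k)).mulVec y) hzero
        simp only [hvk, Matrix.mulVec_zero] at h1
        rwa [aut_cancel_inv (hG (φ k)) z] at h1
      have hNkpos : ∀ k, 0 < ‖vk k‖ := fun k => norm_pos_iff.mpr (hvkne k)
      have hzux2 : ∀ᶠ k in atTop, (2/εw) • (c (φ k) • p (φ k)) - z ∈ closure C := by
        filter_upwards [hBc] with k hk
        have h1 := D_add hC (D_smul hC hk (by positivity : (0:ℝ) ≤ 1/εw)) hzux
        have e : (1/εw) • ((2:ℝ) • (c (φ k) • p (φ k)) - ux) + ((1/εw) • ux - z)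
            = (2/εw) • (c (φ k) • p (φ k)) - z := by
          match_scalars <;> (field_simp; try ring)
        rwa [e] at h1
      have hvkb : ∀ᶠ k in atTop,
          (2 * (c (φ k) * B (φ k)) / εw) • u₀ - vk k ∈ closure C := by
        filter_upwards [hzux2] with k hk
        have h1 := aut_inv_mem_D (hG (φ k)) hk
        have e1 : (G (φ k))⁻¹.mulVec ((2/εw) • (c (φ k) • p (φ k)) - z)
            = (2/εw) • (c (φ k) • ((G (φ k))⁻¹.mulVec (p (φ k)))) - vk k := by
          rw [Matrix.mulVec_sub, Matrix.mulVec_smul, Matrix.mulVec_smul, hvk]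
        rw [e1] at h1
        have h2 := aut_inv_mem_D (hG (φ k)) (hBspec (φ k)).2
        have e2 : (G (φ k))⁻¹.mulVec (B (φ k) • (G (φ k)).mulVec u₀ - p (φ k))
            = B (φ k) • u₀ - (G (φ k))⁻¹.mulVec (p (φ k)) := by
          rw [Matrix.mulVec_sub, Matrix.mulVec_smul, aut_inv_cancel (hG (φ k))]
        rw [e2] at h2
        have hco2 : (0:ℝ) ≤ 2 * c (φ k) / εw :=
          div_nonneg (mul_nonneg (by norm_num) (hcφpos k).le) hεw.le
        have h3 := D_add hC (D_smul hC h2 hco2) h1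
        have e3 : (2 * c (φ k) / εw) • (B (φ k) • u₀ - (G (φ k))⁻¹.mulVec (p (φ k)))
            + ((2/εw) • (c (φ k) • ((G (φ k))⁻¹.mulVec (p (φ k)))) - vk k)
            = (2 * (c (φ k) * B (φ k)) / εw) • u₀ - vk k := by
          match_scalars <;> (field_simp; try ring)
        rwa [e3] at h3
      have hcB : ∀ᶠ k in atTop, c (φ k) * B (φ k) ≤ Bup * K * dd k := by
        filter_upwards [hθup] with k hk
        have hAne : A (φ k) ≠ 0 := ne_of_gt (hAspec (φ k)).1
        have hddne : dd k ≠ 0 := ne_of_gt (hddpos k)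
        have e : c (φ k) * B (φ k) = θ k * (A (φ k) * B (φ k)) * dd k := by
          simp only [hθ]
          field_simp
        rw [e]
        have u1 : θ k * (A (φ k) * B (φ k)) ≤ θ k * K :=
          mul_le_mul_of_nonneg_left (hABK (φ k)) (hθpos k).le
        have u2 : θ k * K ≤ Bup * K := mul_le_mul_of_nonneg_right hk hKpos.le
        have u3 := mul_le_mul_of_nonneg_right (u1.trans u2) (hddpos k).le
        linarith
      set Θ : ℝ := Λ * (2 * (Bup * K) / εw * ‖u₀‖) with hΘ
      have hΘpos : 0 < Θ := by positivity
      have hNkb : ∀ᶠ k in atTop, ‖vk k‖ ≤ Θ * dd k := by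
        filter_upwards [hvkb, hcB] with k h1 h2
        have h3 := hN (vk k) _ (hvkD k) h1
        have hco : 0 ≤ 2 * (c (φ k) * B (φ k)) / εw :=
          div_nonneg (mul_nonneg (by norm_num)
            (mul_nonneg (hcφpos k).le (hBspec (φ k)).1.le)) hεw.le
        rw [norm_smul, Real.norm_eq_abs, abs_of_nonneg hco] at h3
        have h4 : 2 * (c (φ k) * B (φ k)) / εw ≤ 2 * (Bup * K * dd k) / εw :=
          (div_le_div_iff_of_pos_right hεw).mpr (by linarith)
        have h5 : Λ * (2 * (c (φ k) * B (φ k)) / εw * ‖u₀‖)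
            ≤ Λ * (2 * (Bup * K * dd k) / εw * ‖u₀‖) :=
          mul_le_mul_of_nonneg_left (mul_le_mul_of_nonneg_right h4 (norm_nonneg u₀)) hΛ.le
        have h6 : Λ * (2 * (Bup * K * dd k) / εw * ‖u₀‖) = Θ * dd k := by
          simp only [hΘ]; ring
        calc ‖vk k‖ ≤ Λ * (2 * (c (φ k) * B (φ k)) / εw * ‖u₀‖) := h3
          _ ≤ Λ * (2 * (Bup * K * dd k) / εw * ‖u₀‖) := h5
          _ = Θ * dd k := h6
      set uk : ℕ → Vd d := fun k => ‖vk k‖⁻¹ • vk k with huk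
      have huksph : ∀ k, uk k ∈ Metric.sphere (0 : Vd d) 1 := by
        intro k
        simp only [huk, mem_sphere_iff_norm, sub_zero, norm_smul, norm_inv, norm_norm]
        rw [inv_mul_cancel₀ (ne_of_gt (hNkpos k))]
      obtain ⟨vhat, hvhatsph, ψ, hψm, hvhatlim⟩ :=
        (isCompact_sphere (0:Vd d) 1).tendsto_subseq huksph
      have hvhatD : vhat ∈ closure C := by
        apply isClosed_closure.mem_of_tendsto hvhatlim
        apply Filter.Eventually.of_forall
        intro j
        exact D_smul hC (hvkD (ψ j)) (inv_nonneg.mpr (norm_nonneg _))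
      set sk : ℕ → ℝ := fun j => c' (φ (ψ j)) / ‖vk (ψ j)‖ with hsk
      have hGuk : ∀ j, c' (φ (ψ j)) • ((G (φ (ψ j))).mulVec (uk (ψ j))) = sk j • z := by
        intro j
        simp only [huk, hsk]
        rw [Matrix.mulVec_smul]
        simp only [hvk]
        rw [aut_cancel_inv (hG (φ (ψ j))), smul_smul, div_eq_mul_inv]
      have hskz : Tendsto (fun j => sk j • z) atTop (nhds (T.mulVec vhat)) := by
        have hconvψ : Tendsto (fun j => c' (φ (ψ j)) • G (φ (ψ j))) atTop (nhds T) :=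
          hconvφ.comp hψm.tendsto_atTop
        have hpairlim : Tendsto (fun j => (c' (φ (ψ j)) • G (φ (ψ j)), uk (ψ j))) atTop
            (nhds (T, vhat)) := hconvψ.prodMk_nhds hvhatlim
        have h1 := (pair_mulVec_continuous.tendsto (T, vhat)).comp hpairlim
        have e : ((fun q : Md d × Vd d => q.1.mulVec q.2) ∘
            fun j => (c' (φ (ψ j)) • G (φ (ψ j)), uk (ψ j))) = fun j => sk j • z := by
          funext j
          simp only [Function.comp]
          rw [Matrix.smul_mulVec, hGuk j]
        rwa [e] at h1
      have hzn : 0 < ‖z‖ := norm_pos_iff.mpr hz0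
      have hσsk : ∀ j, 0 < σ * sk j := by
        intro j
        have e : σ * sk j = dd (ψ j) / ‖vk (ψ j)‖ := by
          simp only [hsk, hdd]; ring
        rw [e]
        exact div_pos (hddpos _) (hNkpos _)
      have hskσ : ∀ j, sk j = σ * (‖sk j • z‖ / ‖z‖) := by
        intro j
        rw [norm_smul, Real.norm_eq_abs, mul_div_assoc, div_self (ne_of_gt hzn), mul_one]
        rcases hσpm with hσ1 | hσ1
        · have h1 := hσsk j
          rw [hσ1, one_mul] at h1 ⊢
          rw [abs_of_pos h1]
        · have h1 := hσsk j
          rw [hσ1, neg_one_mul] at h1 ⊢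
          rw [abs_of_neg (by linarith), neg_neg]
      have hskabs : Tendsto (fun j => σ * (‖sk j • z‖ / ‖z‖)) atTop
          (nhds (σ * (‖T.mulVec vhat‖ / ‖z‖))) :=
        ((hskz.norm).div_const ‖z‖).const_mul σ
      have hsklim : Tendsto sk atTop (nhds (σ * (‖T.mulVec vhat‖ / ‖z‖))) := by
        have e : (fun j => σ * (‖sk j • z‖ / ‖z‖)) = sk := funext fun j => (hskσ j).symm
        rwa [e] at hskabs
      set e0 : ℝ := σ * (‖T.mulVec vhat‖ / ‖z‖) with he0
      have hσsk2 : ∀ᶠ j in atTop, 1/Θ ≤ σ * sk j := by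
        filter_upwards [hψm.tendsto_atTop.eventually hNkb] with j hj
        have e : σ * sk j = dd (ψ j) / ‖vk (ψ j)‖ := by
          simp only [hsk, hdd]; ring
        rw [e, div_le_div_iff₀ hΘpos (hNkpos (ψ j))]
        linarith
      have he0pos : 0 < σ * e0 := by
        have h1 : 1/Θ ≤ σ * e0 := ge_of_tendsto (hsklim.const_mul σ) hσsk2
        have h2 : 0 < 1/Θ := by positivity
        linarith
      have he0ne : e0 ≠ 0 := by
        intro h
        rw [h, mul_zero] at he0pos
        exact lt_irrefl 0 he0pos
      have hez : e0 • z = T.mulVec vhat := tendsto_nhds_unique (hsklim.smul_const z) hskz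
      refine ⟨vhat + (σ * e0 * δ₁) • u₀, ?_, e0, he0ne, ?_⟩
      · have h1 := C_add_D hC (C_smul hC hu₀ (mul_pos he0pos hδ₁pos)) hvhatD
        rwa [add_comm] at h1
      · have hTu₀ : T.mulVec u₀ = σ • w₀ := by
          rw [hw₀def, smul_smul, hσsq, one_smul]
        have hwzw : w = z + δ₁ • w₀ := by rw [hzdef]; module
        have hco : σ * e0 * δ₁ * σ = e0 * δ₁ := by linear_combination (e0 * δ₁) * hσsq
        calc T.mulVec (vhat + (σ * e0 * δ₁) • u₀)
            = T.mulVec vhat + (σ * e0 * δ₁) • T.mulVec u₀ := by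
              rw [Matrix.mulVec_add, Matrix.mulVec_smul]
          _ = e0 • z + (σ * e0 * δ₁) • (σ • w₀) := by rw [← hez, hTu₀]
          _ = e0 • w := by
              rw [hwzw]
              match_scalars
              case _ => ring
              case _ =>
                linear_combination
                  (σ^2 * ‖T.mulVec vhat‖ * εw * ε *
                    ‖w - (εw * ε) • σ • T.mulVec u₀‖⁻¹) * hσsq
  -- ASSEMBLY
  refine ⟨?_, goalB, ?_⟩
  · intro v hv
    refine ⟨σ • T.mulVec v, ?_, goalA v hv⟩
    rcases hσpm with h | h
    · left; rw [h, one_smul]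
    · right; rw [h, neg_one_smul]
  · have hCU : ∀ v ∈ C, T.mulVec v ∈ Submodule.span ℝ {w : Vd d | InFace C ux w} := by
      intro v hv
      have h1 : σ • T.mulVec v ∈ Submodule.span ℝ {w : Vd d | InFace C ux w} :=
        Submodule.subset_span (goalA v hv)
      have h2 := Submodule.smul_mem _ σ h1
      rwa [smul_smul, hσsq, one_smul] at h2
    apply le_antisymm
    · intro y hy
      rw [LinearMap.mem_range] at hy
      obtain ⟨x, rfl⟩ := hy
      rw [Matrix.toLin'_apply]
      by_cases hx0 : x = 0
      · rw [hx0, Matrix.mulVec_zero]; exact Submodule.zero_mem _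
      · have hxn : 0 < ‖x‖ := norm_pos_iff.mpr hx0
        obtain ⟨r, hr, hball⟩ := Metric.isOpen_iff.mp hC.1 u₀ hu₀
        have hδp : 0 < r/(2*‖x‖) := by positivity
        have hmem : u₀ + (r/(2*‖x‖)) • x ∈ C := by
          apply hball
          rw [Metric.mem_ball, dist_eq_norm, add_sub_cancel_left, norm_smul, Real.norm_eq_abs,
            abs_of_pos hδp]
          have e : r/(2*‖x‖) * ‖x‖ = r/2 := by field_simp
          rw [e]; linarith
        have h2 := hCU _ hmem
        have h3 := hCU u₀ hu₀
        have h4 := Submodule.sub_mem _ h2 h3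
        rw [Matrix.mulVec_add, add_sub_cancel_left, Matrix.mulVec_smul] at h4
        have h5 := Submodule.smul_mem _ (r/(2*‖x‖))⁻¹ h4
        rwa [smul_smul, inv_mul_cancel₀ (ne_of_gt hδp), one_smul] at h5
    · rw [Submodule.span_le]
      rintro w hw
      simp only [SetLike.mem_coe, LinearMap.mem_range]
      by_cases hw0 : w = 0
      · exact ⟨0, by rw [map_zero, hw0]⟩
      · obtain ⟨v, hv, e, he, hTv⟩ := goalB w hw hw0
        refine ⟨e⁻¹ • v, ?_⟩
        rw [Matrix.toLin'_apply, Matrix.mulVec_smul, hTv, smul_smul, inv_mul_cancel₀ he, one_smul]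

end
end

section
/- Let Ω ⊂ P(ℝ^d) be a properly convex domain, x₁, x₂ ∈ ∂Ω with (x₁,x₂) ⊂ Ω, and A, B ⊂ ∂Ω open with disjoint closures. Then there exist disjoint neighborhoods V₁, V₂ of x₁, x₂ in ∂Ω such that for every φ ∈ Aut(Ω), at least one of the four sets φ(V₁)∩A, φ(V₁)∩B, φ(V₂)∩A, φ(V₂)∩B is empty. -/
open Matrix Topology Filter
open scoped MatrixGroups

noncomputable section

lemma continuous_mulVec_pair {d : ℕ} : Continuous (fun p : Md d × Vd d => p.1.mulVec p.2) := by
  apply continuous_pi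
  intro i
  simp only [Matrix.mulVec, dotProduct]
  exact continuous_finset_sum _ fun j _ =>
    ((continuous_apply_apply i j).comp continuous_fst).mul ((continuous_apply j).comp continuous_snd)

lemma continuous_mkP {d : ℕ} : Continuous (Projectivization.mk' ℝ : {v : Vd d // v ≠ 0} → Projectivization ℝ (Vd d)) :=
  continuous_quotient_mk'

/-- scaling map on nonzero vectors -/
def scl {d : ℕ} (c : ℝˣ) (x : {v : Vd d // v ≠ 0}) : {v : Vd d // v ≠ 0} :=
  ⟨(c : ℝ) • x.1, fun h => x.2 (by simpa [Units.ne_zero c, smul_eq_zero] using h)⟩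

lemma isOpenMap_mkP {d : ℕ} : IsOpenMap (Projectivization.mk' ℝ : {v : Vd d // v ≠ 0} → Projectivization ℝ (Vd d)) := by
  intro U hU
  have qm : Topology.IsQuotientMap (Projectivization.mk' ℝ : {v : Vd d // v ≠ 0} → Projectivization ℝ (Vd d)) :=
    isQuotientMap_quotient_mk'
  rw [← qm.isOpen_preimage]
  have key : (Projectivization.mk' ℝ) ⁻¹' ((Projectivization.mk' ℝ) '' U) = ⋃ c : ℝˣ, scl c '' U := by
    ext x
    simp only [Set.mem_preimage, Set.mem_image, Set.mem_iUnion]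
    constructor
    · rintro ⟨y, hy, hxy⟩
      rw [Projectivization.mk'_eq_mk, Projectivization.mk'_eq_mk, Projectivization.mk_eq_mk_iff] at hxy
      obtain ⟨a, ha⟩ := hxy
      rw [Units.smul_def] at ha
      refine ⟨a⁻¹, y, hy, Subtype.ext ?_⟩
      simp [scl, ← ha, smul_smul]
    · rintro ⟨c, y, hy, rfl⟩
      refine ⟨y, hy, ?_⟩
      rw [Projectivization.mk'_eq_mk, Projectivization.mk'_eq_mk, Projectivization.mk_eq_mk_iff]
      refine ⟨c⁻¹, ?_⟩
      rw [Units.smul_def]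
      show ((c⁻¹ : ℝˣ) : ℝ) • ((c : ℝ) • y.1) = y.1
      rw [smul_smul]
      simp
  rw [key]
  apply isOpen_iUnion
  intro c
  have hc : Continuous (scl (d := d) c⁻¹) := by
    apply Continuous.subtype_mk
    exact ((continuous_const_smul ((c⁻¹ : ℝˣ) : ℝ)).comp (continuous_subtype_val (p := fun v : Vd d => v ≠ 0)))
  have : scl c '' U = scl (d := d) c⁻¹ ⁻¹' U := by
    ext x
    simp only [Set.mem_image, Set.mem_preimage]
    constructor
    · rintro ⟨y, hy, rfl⟩
      have : scl (d := d) c⁻¹ (scl c y) = y := by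
        apply Subtype.ext; simp [scl, smul_smul]
      rwa [this]
    · intro hx
      refine ⟨scl c⁻¹ x, hx, ?_⟩
      apply Subtype.ext; simp [scl, smul_smul]
  rw [this]
  exact hU.preimage hc

lemma closure_pos_smul {d : ℕ} {C : Set (Vd d)} (hC : IsProperCone C) {t : ℝ} (ht : 0 < t)
    {v : Vd d} (hv : v ∈ closure C) : t • v ∈ closure C := by
  have hm : Set.MapsTo (fun w : Vd d => t • w) C C := fun w hw => hC.2.2.2.1 w hw t ht
  exact (hm.closure (continuous_const_smul t)) hv

lemma aut_closure {d : ℕ} {C : Set (Vd d)} {g : Md d} (hg : ConeAut C g)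
    {v : Vd d} (hv : v ∈ closure C) : g.mulVec v ∈ closure C := by
  have hm : Set.MapsTo (fun w : Vd d => g.mulVec w) C C := by
    intro w hw
    rw [← hg.2]
    exact ⟨w, hw, rfl⟩
  have hcont : Continuous (fun w : Vd d => g.mulVec w) := by
    have := continuous_mulVec_pair (d := d)
    exact this.comp (continuous_const.prodMk continuous_id)
  exact (hm.closure hcont) hv

lemma tendsto_mkP {d : ℕ} {w : ℕ → Vd d} {l : Vd d} (hl : l ≠ 0)
    (hw : Tendsto w atTop (𝓝 l)) (hwn : ∀ n, w n ≠ 0) :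
    Tendsto (fun n => Projectivization.mk ℝ (w n) (hwn n)) atTop
      (𝓝 (Projectivization.mk ℝ l hl)) := by
  have h1 : Tendsto (fun n => (⟨w n, hwn n⟩ : {v : Vd d // v ≠ 0})) atTop (𝓝 ⟨l, hl⟩) := by
    rw [tendsto_subtype_rng]
    exact hw
  exact (continuous_mkP.tendsto _).comp h1

lemma dotProduct_self_nonneg {d : ℕ} (v : Vd d) : 0 ≤ v ⬝ᵥ v :=
  Finset.sum_nonneg fun i _ => mul_self_nonneg _

lemma exists_disjoint_opens {d : ℕ} (u₁ u₂ : Vd d) (h₁ : u₁ ≠ 0) (h₂ : u₂ ≠ 0)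
    (hne : ∀ c : ℝ, u₂ ≠ c • u₁) :
    ∃ O₁ O₂ : Set (Projectivization ℝ (Vd d)), IsOpen O₁ ∧ IsOpen O₂ ∧
      Projectivization.mk ℝ u₁ h₁ ∈ O₁ ∧ Projectivization.mk ℝ u₂ h₂ ∈ O₂ ∧ O₁ ∩ O₂ = ∅ := by
  classical
  set p : ℝ := u₁ ⬝ᵥ u₁ with hp
  set q : ℝ := u₂ ⬝ᵥ u₂ with hq
  set r : ℝ := u₁ ⬝ᵥ u₂ with hr
  have hppos : 0 < p := lt_of_le_of_ne (dotProduct_self_nonneg u₁)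
    (fun h => h₁ (dotProduct_self_eq_zero.mp h.symm))
  have hqpos : 0 < q := lt_of_le_of_ne (dotProduct_self_nonneg u₂)
    (fun h => h₂ (dotProduct_self_eq_zero.mp h.symm))
  -- strict Cauchy-Schwarz
  have hw0 : p • u₂ - r • u₁ ≠ 0 := by
    intro h
    apply hne (r / p)
    have : p • u₂ = r • u₁ := by
      have := sub_eq_zero.mp h
      exact this
    calc u₂ = (p⁻¹ * p) • u₂ := by rw [inv_mul_cancel₀ hppos.ne', one_smul]
    _ = p⁻¹ • (p • u₂) := by rw [mul_smul]
    _ = p⁻¹ • (r • u₁) := by rw [this]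
    _ = (r / p) • u₁ := by rw [smul_smul, div_eq_inv_mul]
  have hwpos : 0 < (p • u₂ - r • u₁) ⬝ᵥ (p • u₂ - r • u₁) :=
    lt_of_le_of_ne (dotProduct_self_nonneg _)
      (fun h => hw0 (dotProduct_self_eq_zero.mp h.symm))
  have hexp : (p • u₂ - r • u₁) ⬝ᵥ (p • u₂ - r • u₁) = p * (p * q - r * r) := by
    simp only [sub_dotProduct, dotProduct_sub, smul_dotProduct,
      dotProduct_smul, smul_eq_mul]
    have hcomm : u₂ ⬝ᵥ u₁ = r := dotProduct_comm u₂ u₁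
    rw [hcomm, ← hp, ← hq, ← hr]
    ring
  have hCS : r * r < p * q := by nlinarith
  -- the separating function
  set f : {v : Vd d // v ≠ 0} → ℝ := fun x => (u₁ ⬝ᵥ x.1)^2 / (x.1 ⬝ᵥ x.1) with hf
  have hfwd : ∀ (a b : {v : Vd d // v ≠ 0}) (t : ℝ), (a : Vd d) = t • (b : Vd d) → f a = f b := by
    rintro ⟨a, ha⟩ ⟨b, hb⟩ t hab
    have hab' : a = t • b := hab
    have ht : t ≠ 0 := by rintro rfl; simp at hab'; exact ha hab'
    have hbb : (b ⬝ᵥ b) ≠ 0 := fun h => hb (dotProduct_self_eq_zero.mp h)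
    subst hab'
    simp only [hf, dotProduct_smul, smul_dotProduct, smul_eq_mul]
    field_simp
  set h : Projectivization ℝ (Vd d) → ℝ := Projectivization.lift f hfwd with hh
  have hcont : Continuous h := by
    have qm : Topology.IsQuotientMap
        (Projectivization.mk' ℝ : {v : Vd d // v ≠ 0} → Projectivization ℝ (Vd d)) :=
      isQuotientMap_quotient_mk'
    rw [qm.continuous_iff]
    have : (h ∘ Projectivization.mk' ℝ) = f := rfl
    rw [this]
    apply Continuous.div
    · have : Continuous (fun x : {v : Vd d // v ≠ 0} => u₁ ⬝ᵥ x.1) := by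
        simp only [dotProduct]
        exact continuous_finset_sum _ fun j _ =>
          continuous_const.mul ((continuous_apply j).comp continuous_subtype_val)
      exact this.pow 2
    · simp only [dotProduct]
      exact continuous_finset_sum _ fun j _ =>
        ((continuous_apply j).comp continuous_subtype_val).mul
          ((continuous_apply j).comp continuous_subtype_val)
    · intro x
      exact fun hx => x.2 (dotProduct_self_eq_zero.mp hx)
  have hval1 : h (Projectivization.mk ℝ u₁ h₁) = p := by
    show f ⟨u₁, h₁⟩ = p
    simp only [hf, ← hp]
    rw [pow_two]
    field_simp
  have hval2 : h (Projectivization.mk ℝ u₂ h₂) = r^2 / q := by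
    show f ⟨u₂, h₂⟩ = r^2 / q
    rfl
  have hlt : h (Projectivization.mk ℝ u₂ h₂) < h (Projectivization.mk ℝ u₁ h₁) := by
    rw [hval1, hval2]
    rw [div_lt_iff₀ hqpos]
    nlinarith
  refine ⟨h ⁻¹' Set.Ioi ((h (Projectivization.mk ℝ u₂ h₂) + h (Projectivization.mk ℝ u₁ h₁))/2),
          h ⁻¹' Set.Iio ((h (Projectivization.mk ℝ u₂ h₂) + h (Projectivization.mk ℝ u₁ h₁))/2),
          isOpen_Ioi.preimage hcont, isOpen_Iio.preimage hcont, ?_, ?_, ?_⟩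
  · simp only [Set.mem_preimage, Set.mem_Ioi]; linarith
  · simp only [Set.mem_preimage, Set.mem_Iio]; linarith
  · ext x
    simp only [Set.mem_inter_iff, Set.mem_preimage, Set.mem_Ioi, Set.mem_Iio,
      Set.mem_empty_iff_false, iff_false, not_and, not_lt]
    exact fun h' => le_of_lt h'

section MatrixNorm
attribute [local instance] Matrix.normedAddCommGroup Matrix.normedSpace

lemma exists_limit {d : ℕ} (g : ℕ → Md d) (hg0 : ∀ n, g n ≠ 0) :
    ∃ (T : Md d) (ψ : ℕ → ℕ), StrictMono ψ ∧ T ≠ 0 ∧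
      Tendsto (fun n => ‖g (ψ n)‖⁻¹ • g (ψ n)) atTop (𝓝 T) := by
  have hmem : ∀ n, ‖g n‖⁻¹ • g n ∈ Metric.sphere (0 : Md d) 1 := by
    intro n
    simp only [Metric.mem_sphere, dist_zero_right, norm_smul, norm_inv, norm_norm]
    rw [inv_mul_cancel₀ (norm_ne_zero_iff.mpr (hg0 n))]
  obtain ⟨T, hT, ψ, hψ, hconv⟩ :=
    (isCompact_sphere (0 : Md d) 1).tendsto_subseq hmem
  refine ⟨T, ψ, hψ, ?_, hconv⟩
  intro h
  rw [h] at hT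
  simp at hT
end MatrixNorm

lemma unit_mulVec_ne_zero {d : ℕ} {g : Md d} (hg : IsUnit g) {v : Vd d} (hv : v ≠ 0) :
    g.mulVec v ≠ 0 := by
  obtain ⟨u, hu⟩ := hg
  intro h
  apply hv
  have : ((u⁻¹ : (Md d)ˣ) : Md d).mulVec (g.mulVec v) = v := by
    rw [Matrix.mulVec_mulVec, ← hu, Units.inv_mul, Matrix.one_mulVec]
  rw [h, Matrix.mulVec_zero] at this
  exact this.symm

lemma ker_avoid {d : ℕ} {C : Set (Vd d)} (hC : IsProperCone C) {T : Md d} (hT : T ≠ 0)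
    (hTc : ∀ v ∈ closure C, T.mulVec v ∈ closure C) {v : Vd d} (hv : v ∈ C) :
    T.mulVec v ≠ 0 := by
  intro h0
  apply hT
  have hall : ∀ w : Vd d, T.mulVec w = 0 := by
    intro w
    have hcont : Continuous (fun t : ℝ => v + t • w) := by
      exact continuous_const.add (continuous_id.smul continuous_const)
    have : (fun t : ℝ => v + t • w) ⁻¹' C ∈ 𝓝 (0 : ℝ) := by
      apply hcont.continuousAt.preimage_mem_nhds
      simpa using hC.1.mem_nhds hv
    obtain ⟨ε, hε, hball⟩ := Metric.mem_nhds_iff.mp this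
    set δ := ε / 2 with hδ
    have hδpos : 0 < δ := by positivity
    have hmem : ∀ s : ℝ, |s| < ε → v + s • w ∈ C := by
      intro s hs
      exact hball (by simpa [Real.dist_eq] using hs)
    have h1 : v + δ • w ∈ C := hmem δ (by rw [abs_of_pos hδpos]; linarith)
    have h2 : v + (-δ) • w ∈ C := hmem (-δ) (by rw [abs_neg, abs_of_pos hδpos]; linarith)
    have e1 : T.mulVec (v + δ • w) = δ • T.mulVec w := by
      rw [Matrix.mulVec_add, h0, Matrix.mulVec_smul]
      simp
    have e2 : T.mulVec (v + (-δ) • w) = -(δ • T.mulVec w) := by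
      rw [Matrix.mulVec_add, h0, Matrix.mulVec_smul]
      simp [neg_smul]
    have m1 : δ • T.mulVec w ∈ closure C := e1 ▸ hTc _ (subset_closure h1)
    have m2 : -(δ • T.mulVec w) ∈ closure C := e2 ▸ hTc _ (subset_closure h2)
    have := hC.2.2.2.2 _ m1 m2
    have := smul_eq_zero.mp this
    rcases this with h | h
    · exact absurd h hδpos.ne'
    · exact h
  ext i j
  have := congrFun (hall (Pi.single j 1)) i
  rw [Matrix.mulVec_single] at this
  simpa using this

section MatrixNorm2
attribute [local instance] Matrix.normedAddCommGroup Matrix.normedSpace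

set_option maxHeartbeats 1000000 in
lemma key_contra {d : ℕ} {A B : Set (Projectivization ℝ (Vd d))}
    (hAB : closure A ∩ closure B = ∅)
    {T : Md d} {u : Vd d} (hTu : T.mulVec u ≠ 0)
    (g : ℕ → Md d) (hunit : ∀ n, IsUnit (g n)) (hg0 : ∀ n, g n ≠ 0)
    (hconv : Tendsto (fun n => ‖g n‖⁻¹ • g n) atTop (𝓝 T))
    (a b : ℕ → Vd d) (ha0 : ∀ n, a n ≠ 0) (hb0 : ∀ n, b n ≠ 0)
    (hta : Tendsto a atTop (𝓝 u)) (htb : Tendsto b atTop (𝓝 u))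
    (haA : ∀ n, Projectivization.mk ℝ ((g n).mulVec (a n)) (unit_mulVec_ne_zero (hunit n) (ha0 n)) ∈ A)
    (hbB : ∀ n, Projectivization.mk ℝ ((g n).mulVec (b n)) (unit_mulVec_ne_zero (hunit n) (hb0 n)) ∈ B) :
    False := by
  have claim : ∀ (v : ℕ → Vd d) (hv0 : ∀ n, v n ≠ 0), Tendsto v atTop (𝓝 u) →
      Tendsto (fun n => Projectivization.mk ℝ ((g n).mulVec (v n))
        (unit_mulVec_ne_zero (hunit n) (hv0 n))) atTop
        (𝓝 (Projectivization.mk ℝ (T.mulVec u) hTu)) := by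
    intro v hv0 htv
    set w : ℕ → Vd d := fun n => (‖g n‖⁻¹ • g n).mulVec (v n) with hw
    have hwt : Tendsto w atTop (𝓝 (T.mulVec u)) := by
      have hp : Tendsto (fun n => (‖g n‖⁻¹ • g n, v n)) atTop (𝓝 (T, u)) :=
        hconv.prodMk_nhds htv
      exact (continuous_mulVec_pair.tendsto (T, u)).comp hp
    have hwn : ∀ n, w n ≠ 0 := by
      intro n
      rw [hw]
      show (‖g n‖⁻¹ • g n).mulVec (v n) ≠ 0
      rw [Matrix.smul_mulVec]
      exact smul_ne_zero (inv_ne_zero (norm_ne_zero_iff.mpr (hg0 n)))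
        (unit_mulVec_ne_zero (hunit n) (hv0 n))
    have heq : ∀ n, Projectivization.mk ℝ (w n) (hwn n) =
        Projectivization.mk ℝ ((g n).mulVec (v n)) (unit_mulVec_ne_zero (hunit n) (hv0 n)) := by
      intro n
      rw [Projectivization.mk_eq_mk_iff']
      exact ⟨‖g n‖⁻¹, (Matrix.smul_mulVec _ _ _).symm⟩
    have := tendsto_mkP hTu hwt hwn
    refine this.congr fun n => heq n
  have hA : Projectivization.mk ℝ (T.mulVec u) hTu ∈ closure A :=
    mem_closure_of_tendsto (claim a ha0 hta) (Eventually.of_forall haA)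
  have hB : Projectivization.mk ℝ (T.mulVec u) hTu ∈ closure B :=
    mem_closure_of_tendsto (claim b hb0 htb) (Eventually.of_forall hbB)
  have : Projectivization.mk ℝ (T.mulVec u) hTu ∈ closure A ∩ closure B := ⟨hA, hB⟩
  rw [hAB] at this
  exact this
end MatrixNorm2

section MatrixNorm3
attribute [local instance] Matrix.normedAddCommGroup Matrix.normedSpace

set_option maxHeartbeats 1000000 in
lemma limit_maps_closure {d : ℕ} {C : Set (Vd d)} (hC : IsProperCone C)
    (g : ℕ → Md d) (hg0 : ∀ n, g n ≠ 0) (haut : ∀ n, ConeAut C (g n)) {T : Md d}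
    (hconv : Tendsto (fun n => ‖g n‖⁻¹ • g n) atTop (𝓝 T)) :
    ∀ v ∈ closure C, T.mulVec v ∈ closure C := by
  intro v hv
  have hten : Tendsto (fun n => (‖g n‖⁻¹ • g n).mulVec v) atTop (𝓝 (T.mulVec v)) :=
    (continuous_mulVec_pair.tendsto (T, v)).comp (hconv.prodMk_nhds tendsto_const_nhds)
  refine isClosed_closure.mem_of_tendsto hten (Eventually.of_forall fun n => ?_)
  show (‖g n‖⁻¹ • g n).mulVec v ∈ closure C
  rw [Matrix.smul_mulVec]
  exact closure_pos_smul hC (inv_pos.mpr (norm_pos_iff.mpr (hg0 n))) (aut_closure (haut n) hv)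
end MatrixNorm3


/-- given two boundary points `[u₁], [u₂]` joined by a segment through
`Ω`, and open subsets `A, B` of `∂Ω` with disjoint closures, there are disjoint
neighborhoods `V₁, V₂` of `[u₁], [u₂]` in `∂Ω` such that for every automorphism `φ`
at least one of `φ(V₁) ∩ A`, `φ(V₁) ∩ B`, `φ(V₂) ∩ A`, `φ(V₂) ∩ B` is empty. -/
theorem stmt19 {d : ℕ} (C : Set (Vd d)) (hC : IsProperCone C)
    (u₁ u₂ : Vd d) (h₁0 : u₁ ≠ 0) (h₂0 : u₂ ≠ 0)
    (h₁c : u₁ ∈ closure C) (h₂c : u₂ ∈ closure C) (h₁b : u₁ ∉ C) (h₂b : u₂ ∉ C)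
    (hseg : ∀ s t : ℝ, 0 < s → 0 < t → s • u₁ + t • u₂ ∈ C)
    (A B : Set (Projectivization ℝ (Vd d)))
    (hA : ∃ A' : Set (Projectivization ℝ (Vd d)), IsOpen A' ∧
      A = A' ∩ (closure (projSet C) \ projSet C))
    (hB : ∃ B' : Set (Projectivization ℝ (Vd d)), IsOpen B' ∧
      B = B' ∩ (closure (projSet C) \ projSet C))
    (hAB : closure A ∩ closure B = ∅) :
    ∃ V₁ V₂ : Set (Projectivization ℝ (Vd d)),
      V₁ ∈ nhdsWithin (Projectivization.mk ℝ u₁ h₁0) (closure (projSet C) \ projSet C) ∧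
      V₂ ∈ nhdsWithin (Projectivization.mk ℝ u₂ h₂0) (closure (projSet C) \ projSet C) ∧
      V₁ ∩ V₂ = ∅ ∧
      ∀ φ : GL (Fin d) ℝ, ConeAut C (↑φ : Md d) →
        (pAct φ '' V₁ ∩ A = ∅ ∨ pAct φ '' V₁ ∩ B = ∅ ∨
         pAct φ '' V₂ ∩ A = ∅ ∨ pAct φ '' V₂ ∩ B = ∅) := by
  classical
  by_contra hcon
  set S : Set (Projectivization ℝ (Vd d)) := closure (projSet C) \ projSet C with hS
  -- u₂ is not a multiple of u₁
  have hx12 : ∀ c : ℝ, u₂ ≠ c • u₁ := by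
    intro c hc
    rcases lt_trichotomy c 0 with h | h | h
    · -- c < 0 : -u₁ ∈ closure C
      have hnegc : (0:ℝ) < -c := by linarith
      have : (-c)⁻¹ • u₂ ∈ closure C := closure_pos_smul hC (by positivity) h₂c
      have hneg : -u₁ ∈ closure C := by
        have e : (-c)⁻¹ • u₂ = -u₁ := by
          rw [hc, smul_smul]
          have : (-c)⁻¹ * c = -1 := by field_simp [h.ne]
          rw [this, neg_one_smul]
        rwa [e] at this
      have := hC.2.2.2.2 u₁ h₁c (by rwa [])
      exact h₁0 this
    · rw [h, zero_smul] at hc; exact h₂0 hc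
    · -- c > 0 : u₁ ∈ C
      have hsum : (1:ℝ) • u₁ + (1:ℝ) • u₂ ∈ C := hseg 1 1 one_pos one_pos
      have : (1 + c) • u₁ ∈ C := by
        have e : (1:ℝ) • u₁ + (1:ℝ) • u₂ = (1 + c) • u₁ := by
          rw [hc, one_smul, one_smul, add_smul, one_smul]
        rwa [e] at hsum
      have := hC.2.2.2.1 _ this ((1+c)⁻¹) (by positivity)
      rw [smul_smul, inv_mul_cancel₀ (by positivity), one_smul] at this
      exact h₁b this
  obtain ⟨O₁, O₂, hO₁, hO₂, hxO₁, hxO₂, hOdisj⟩ := exists_disjoint_opens u₁ u₂ h₁0 h₂0 hx12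
  -- radii
  have hm₁ : (⟨u₁, h₁0⟩ : {v : Vd d // v ≠ 0}) ∈ (Projectivization.mk' ℝ) ⁻¹' O₁ := by
    show Projectivization.mk' ℝ ⟨u₁, h₁0⟩ ∈ O₁
    rwa [Projectivization.mk'_eq_mk]
  have hm₂ : (⟨u₂, h₂0⟩ : {v : Vd d // v ≠ 0}) ∈ (Projectivization.mk' ℝ) ⁻¹' O₂ := by
    show Projectivization.mk' ℝ ⟨u₂, h₂0⟩ ∈ O₂
    rwa [Projectivization.mk'_eq_mk]
  obtain ⟨ε₁, hε₁, hball₁⟩ := Metric.isOpen_iff.mp (hO₁.preimage continuous_mkP) _ hm₁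
  obtain ⟨ε₂, hε₂, hball₂⟩ := Metric.isOpen_iff.mp (hO₂.preimage continuous_mkP) _ hm₂
  set U : ℕ → Set (Projectivization ℝ (Vd d)) := fun n =>
    Projectivization.mk' ℝ '' Metric.ball (⟨u₁, h₁0⟩ : {v : Vd d // v ≠ 0}) (min ε₁ (1/(n+1)))
    with hU
  set W : ℕ → Set (Projectivization ℝ (Vd d)) := fun n =>
    Projectivization.mk' ℝ '' Metric.ball (⟨u₂, h₂0⟩ : {v : Vd d // v ≠ 0}) (min ε₂ (1/(n+1)))
    with hW
  have hrad : ∀ n : ℕ, (0:ℝ) < 1/(n+1) := by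
    intro n; positivity
  have hUopen : ∀ n, IsOpen (U n) := fun n => isOpenMap_mkP _ Metric.isOpen_ball
  have hWopen : ∀ n, IsOpen (W n) := fun n => isOpenMap_mkP _ Metric.isOpen_ball
  have hUx : ∀ n, Projectivization.mk ℝ u₁ h₁0 ∈ U n := by
    intro n
    exact ⟨⟨u₁, h₁0⟩, Metric.mem_ball_self (lt_min hε₁ (hrad n)), Projectivization.mk'_eq_mk _ _⟩
  have hWx : ∀ n, Projectivization.mk ℝ u₂ h₂0 ∈ W n := by
    intro n
    exact ⟨⟨u₂, h₂0⟩, Metric.mem_ball_self (lt_min hε₂ (hrad n)), Projectivization.mk'_eq_mk _ _⟩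
  have hUsub : ∀ n, U n ⊆ O₁ := by
    intro n x ⟨y, hy, hyx⟩
    exact hyx ▸ hball₁ (Metric.ball_subset_ball (min_le_left _ _) hy)
  have hWsub : ∀ n, W n ⊆ O₂ := by
    intro n x ⟨y, hy, hyx⟩
    exact hyx ▸ hball₂ (Metric.ball_subset_ball (min_le_left _ _) hy)
  -- extract automorphisms
  have hmain : ∀ n : ℕ, ∃ φ : GL (Fin d) ℝ, ConeAut C (↑φ : Md d) ∧
      (pAct φ '' (U n ∩ S) ∩ A).Nonempty ∧ (pAct φ '' (U n ∩ S) ∩ B).Nonempty ∧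
      (pAct φ '' (W n ∩ S) ∩ A).Nonempty ∧ (pAct φ '' (W n ∩ S) ∩ B).Nonempty := by
    intro n
    by_contra h'
    push_neg at h'
    apply hcon
    refine ⟨U n ∩ S, W n ∩ S, ?_, ?_, ?_, ?_⟩
    · exact Filter.inter_mem (mem_nhdsWithin_of_mem_nhds ((hUopen n).mem_nhds (hUx n)))
        self_mem_nhdsWithin
    · exact Filter.inter_mem (mem_nhdsWithin_of_mem_nhds ((hWopen n).mem_nhds (hWx n)))
        self_mem_nhdsWithin
    · apply Set.eq_empty_of_subset_empty
      rw [← hOdisj]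
      exact fun x hx => ⟨hUsub n hx.1.1, hWsub n hx.2.1⟩
    · intro φ hφ
      rcases Set.eq_empty_or_nonempty (pAct φ '' (U n ∩ S) ∩ A) with h1 | h1
      · exact Or.inl h1
      rcases Set.eq_empty_or_nonempty (pAct φ '' (U n ∩ S) ∩ B) with h2 | h2
      · exact Or.inr (Or.inl h2)
      rcases Set.eq_empty_or_nonempty (pAct φ '' (W n ∩ S) ∩ A) with h3 | h3
      · exact Or.inr (Or.inr (Or.inl h3))
      exact Or.inr (Or.inr (Or.inr (h' φ hφ h1 h2 h3)))
  choose φ hφaut hne1 hne2 hne3 hne4 using hmain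
  -- extraction of points
  have extract : ∀ (n : ℕ) (X : Set (Projectivization ℝ (Vd d))) (c : Vd d) (hc : c ≠ 0) (ε : ℝ),
      (pAct (φ n) '' ((Projectivization.mk' ℝ ''
        Metric.ball (⟨c, hc⟩ : {v : Vd d // v ≠ 0}) ε) ∩ S) ∩ X).Nonempty →
      ∃ (v : Vd d) (hv : v ≠ 0), dist v c < ε ∧
        ∀ hgv : (↑(φ n) : Md d).mulVec v ≠ 0, Projectivization.mk ℝ _ hgv ∈ X := by
    rintro n X c hc ε ⟨x, ⟨p, ⟨⟨y, hyball, hyp⟩, _⟩, hpx⟩, hxX⟩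
    refine ⟨y.1, y.2, ?_, ?_⟩
    · simpa [Subtype.dist_eq] using hyball
    · intro hgv
      have : pAct (φ n) p = Projectivization.mk ℝ ((↑(φ n) : Md d).mulVec y.1) hgv := by
        rw [← hyp]
        have : Projectivization.mk' ℝ y = Projectivization.mk ℝ y.1 y.2 :=
          Projectivization.mk'_eq_mk _ _
        rw [this]
        show Projectivization.map _ _ _ = _
        rw [Projectivization.map_mk, Projectivization.mk_eq_mk_iff']
        exact ⟨1, by simp [Matrix.toLin'_apply]⟩
      rw [← this, hpx]
      exact hxX
  have hget1 := fun n => extract n A u₁ h₁0 _ (hne1 n)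
  have hget2 := fun n => extract n B u₁ h₁0 _ (hne2 n)
  have hget3 := fun n => extract n A u₂ h₂0 _ (hne3 n)
  have hget4 := fun n => extract n B u₂ h₂0 _ (hne4 n)
  choose a ha0 hadist haA using hget1
  choose b hb0 hbdist hbB using hget2
  choose c hc0 hcdist hcA using hget3
  choose e he0 hedist heB using hget4
  -- compactness
  have hg0 : ∀ n, (↑(φ n) : Md d) ≠ 0 := by
    intro n h
    apply unit_mulVec_ne_zero (φ n).isUnit h₁0
    rw [h, Matrix.zero_mulVec]
  obtain ⟨T, ψ, hψmono, hT0, hTconv⟩ := exists_limit (fun n => (↑(φ n) : Md d)) hg0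
  have hg0ψ' : ∀ n, (↑(φ (ψ n)) : Md d) ≠ 0 := fun n => hg0 (ψ n)
  have hautψ' : ∀ n, ConeAut C (↑(φ (ψ n)) : Md d) := fun n => hφaut (ψ n)
  have hTc : ∀ v ∈ closure C, T.mulVec v ∈ closure C :=
    limit_maps_closure hC (fun n => (↑(φ (ψ n)) : Md d)) hg0ψ' hautψ' hTconv
  -- T doesn't kill both u₁ and u₂
  have hsumC : u₁ + u₂ ∈ C := by
    have := hseg 1 1 one_pos one_pos
    simpa using this
  have hTne : T.mulVec (u₁ + u₂) ≠ 0 := ker_avoid hC hT0 hTc hsumC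
  have hor : T.mulVec u₁ ≠ 0 ∨ T.mulVec u₂ ≠ 0 := by
    by_contra h'
    push_neg at h'
    apply hTne
    rw [Matrix.mulVec_add, h'.1, h'.2, add_zero]
  -- convergence of the chosen sequences along ψ
  have hseqlim : ∀ (v : ℕ → Vd d) (z : Vd d), (∀ n, dist (v n) z < min ε₁ (1/(n+1)) ∨
      dist (v n) z < min ε₂ (1/(n+1))) → Tendsto (fun n => v (ψ n)) atTop (𝓝 z) := by
    intro v z hd
    rw [Metric.tendsto_atTop]
    intro ε hε
    obtain ⟨N, hN⟩ := exists_nat_one_div_lt hε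
    refine ⟨N, fun n hn => ?_⟩
    have hb : dist (v (ψ n)) z < 1/(ψ n + 1) := by
      rcases hd (ψ n) with h | h
      · exact lt_of_lt_of_le h (min_le_right _ _)
      · exact lt_of_lt_of_le h (min_le_right _ _)
    have h1 : (n:ℝ) ≤ (ψ n : ℝ) := by exact_mod_cast hψmono.le_apply
    have h2 : (N:ℝ) ≤ (n : ℝ) := by exact_mod_cast hn
    calc dist (v (ψ n)) z < 1/(ψ n + 1) := hb
      _ ≤ 1/(N + 1) := by
          apply one_div_le_one_div_of_le (by positivity)
          linarith
      _ < ε := hN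
  -- finish
  have hunitψ : ∀ n, IsUnit ((↑(φ (ψ n)) : Md d)) := fun n => (φ (ψ n)).isUnit
  have hg0ψ : ∀ n, (↑(φ (ψ n)) : Md d) ≠ 0 := fun n => hg0 (ψ n)
  rcases hor with hTu | hTu
  · exact key_contra hAB hTu (fun n => (↑(φ (ψ n)) : Md d)) hunitψ hg0ψ hTconv
      (fun n => a (ψ n)) (fun n => b (ψ n)) (fun n => ha0 (ψ n)) (fun n => hb0 (ψ n))
      (hseqlim a u₁ (fun n => Or.inl (hadist n)))
      (hseqlim b u₁ (fun n => Or.inl (hbdist n)))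
      (fun n => haA (ψ n) _) (fun n => hbB (ψ n) _)
  · exact key_contra hAB hTu (fun n => (↑(φ (ψ n)) : Md d)) hunitψ hg0ψ hTconv
      (fun n => c (ψ n)) (fun n => e (ψ n)) (fun n => hc0 (ψ n)) (fun n => he0 (ψ n))
      (hseqlim c u₂ (fun n => Or.inr (hcdist n)))
      (hseqlim e u₂ (fun n => Or.inr (hedist n)))
      (fun n => hcA (ψ n) _) (fun n => heB (ψ n) _)


end
end
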